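/- arXiv:1610.02672 — 7 statements merged into one kernel-verified Lean document; each statement's English description precedes it below -/
import Mathlib

section
/- For every integer p ≥ 4, there exists a finite string C-group of rank 3 of type {p, p} that is externally self-dual, i.e., it admits a group automorphism sending each ρᵢ to ρ_{2−i} but admits no dualizing element. -/
/-- An element `α` is dualizing for the generating family `ρ` if conjugation by `α`
sends each `ρ i` to `ρ (n - 1 - i)`. -/
def IsDualizing {G : Type*} [Group G] {n : ℕ} (ρ : Fin n → G) (α : G) : Prop :=
  ∀ i : Fin n, α * ρ i * α⁻¹ = ρ i.rev

/-- `ρ : Fin n → G` makes `G` a string C-group of rank `n`: the `ρ i` generate `G`,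
each has order 2, far-apart generators commute, and the intersection property holds. -/
def IsStringCGroup {G : Type*} [Group G] {n : ℕ} (ρ : Fin n → G) : Prop :=
  Subgroup.closure (Set.range ρ) = ⊤ ∧
  (∀ i, orderOf (ρ i) = 2) ∧
  (∀ i j : Fin n, ((i : ℕ) + 2 ≤ (j : ℕ) ∨ (j : ℕ) + 2 ≤ (i : ℕ)) → (ρ i * ρ j) ^ 2 = 1) ∧
  ∀ I J : Set (Fin n),
    Subgroup.closure (ρ '' I) ⊓ Subgroup.closure (ρ '' J) = Subgroup.closure (ρ '' (I ∩ J))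

namespace ESD

abbrev F2 := ZMod 2

variable (p : ℕ) [NeZero p]

abbrev R := ZMod p → F2

def β (m m' : R p) : F2 := ∑ k : ZMod p, m k * m' (k + 2)

lemma β_add_left (m₁ m₂ m' : R p) : β p (m₁ + m₂) m' = β p m₁ m' + β p m₂ m' := by
  simp [β, add_mul, Finset.sum_add_distrib]

lemma β_add_right (m m₁ m₂ : R p) : β p m (m₁ + m₂) = β p m m₁ + β p m m₂ := by
  simp [β, mul_add, Finset.sum_add_distrib]

def V : AddSubgroup (R p) where
  carrier := {f | ∑ k, f k = 0}
  add_mem' := by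
    intro a b ha hb
    simp only [Set.mem_setOf_eq, Pi.add_apply, Finset.sum_add_distrib] at *
    simp [ha, hb]
  zero_mem' := by simp
  neg_mem' := by
    intro a ha
    simp only [Set.mem_setOf_eq, Pi.neg_apply] at *
    simp [ha]

abbrev K := (V p) × F2

instance : Mul (K p) := ⟨fun a b => (a.1 + b.1, a.2 + b.2 + β p (a.1 : R p) (b.1 : R p))⟩
instance : One (K p) := ⟨(0, 0)⟩
instance : Inv (K p) := ⟨fun a => (a.1, a.2 + β p (a.1 : R p) (a.1 : R p))⟩

lemma kmul_def (a b : K p) :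
    a * b = (a.1 + b.1, a.2 + b.2 + β p (a.1 : R p) (b.1 : R p)) := rfl
lemma kone_def : (1 : K p) = (0, 0) := rfl
lemma kinv_def (a : K p) : a⁻¹ = (a.1, a.2 + β p (a.1 : R p) (a.1 : R p)) := rfl

lemma two_eq_zero (x : F2) : x + x = 0 := by
  have : (2 : F2) = 0 := rfl
  calc x + x = 2 * x := by ring
  _ = 0 := by rw [this]; ring

instance : Group (K p) where
  mul_assoc a b c := by
    refine Prod.ext ?_ ?_
    · show a.1 + b.1 + c.1 = a.1 + (b.1 + c.1); rw [add_assoc]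
    · show (a.2 + b.2 + β p a.1 b.1) + c.2 + β p (↑(a.1 + b.1)) c.1
        = a.2 + (b.2 + c.2 + β p b.1 c.1) + β p a.1 (↑(b.1 + c.1))
      push_cast
      rw [β_add_left, β_add_right]
      ring
  one_mul a := by
    refine Prod.ext ?_ ?_
    · show 0 + a.1 = a.1; rw [zero_add]
    · show 0 + a.2 + β p (↑(0 : V p)) a.1 = a.2
      simp [β]
  mul_one a := by
    refine Prod.ext ?_ ?_
    · show a.1 + 0 = a.1; rw [add_zero]
    · show a.2 + 0 + β p a.1 (↑(0 : V p)) = a.2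
      simp [β]
  inv_mul_cancel a := by
    refine Prod.ext ?_ ?_
    · show a.1 + a.1 = 0
      ext k
      exact two_eq_zero _
    · show a.2 + β p a.1 a.1 + a.2 + β p a.1 a.1 = 0
      have h1 := two_eq_zero (a.2 + β p (a.1 : R p) (a.1 : R p))
      calc a.2 + β p (a.1 : R p) a.1 + a.2 + β p (a.1 : R p) a.1
        = (a.2 + β p (a.1 : R p) a.1) + (a.2 + β p (a.1 : R p) a.1) := by ring
      _ = 0 := h1

lemma add_self_zero (x : F2) : x + x = 0 := two_eq_zero x

def shiftF (i : ZMod p) (m : R p) : R p := fun k => m (k + i)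
def flipF (i : ZMod p) (m : R p) : R p := fun k => m (i - k)

lemma sum_shiftF (i : ZMod p) (m : R p) : ∑ k, shiftF p i m k = ∑ k, m k :=
  Fintype.sum_equiv (Equiv.addRight i) _ _ (fun _ => rfl)

lemma sum_flipF (i : ZMod p) (m : R p) : ∑ k, flipF p i m k = ∑ k, m k :=
  Fintype.sum_equiv (Equiv.subLeft i) _ _ (fun _ => rfl)

lemma β_shift (i : ZMod p) (m m' : R p) :
    β p (shiftF p i m) (shiftF p i m') = β p m m' := by
  apply Fintype.sum_equiv (Equiv.addRight i)
  intro k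
  show m (k + i) * m' ((k + 2) + i) = m (k + i) * m' ((k + i) + 2)
  rw [add_right_comm]

lemma β_flip (i : ZMod p) (m m' : R p) :
    β p (flipF p i m) (flipF p i m') = β p m' m := by
  apply Fintype.sum_equiv (Equiv.subLeft (i - 2))
  intro k
  show m (i - k) * m' (i - (k + 2)) = m' (i - 2 - k) * m (i - 2 - k + 2)
  rw [mul_comm]
  congr 1 <;> congr 1 <;> ring

def shiftV (i : ZMod p) (m : V p) : V p :=
  ⟨shiftF p i (m : R p), by
    show ∑ k, shiftF p i (m : R p) k = 0
    rw [sum_shiftF]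
    exact m.2⟩

def flipV (i : ZMod p) (m : V p) : V p :=
  ⟨flipF p i (m : R p), by
    show ∑ k, flipF p i (m : R p) k = 0
    rw [sum_flipF]
    exact m.2⟩

@[simp] lemma shiftV_coe (i : ZMod p) (m : V p) (k : ZMod p) :
    ((shiftV p i m : V p) : R p) k = (m : R p) (k + i) := rfl
@[simp] lemma flipV_coe (i : ZMod p) (m : V p) (k : ZMod p) :
    ((flipV p i m : V p) : R p) k = (m : R p) (i - k) := rfl

def rotK (i : ZMod p) : K p ≃* K p where
  toFun a := (shiftV p i a.1, a.2)
  invFun a := (shiftV p (-i) a.1, a.2)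
  left_inv a := by
    refine Prod.ext ?_ rfl
    ext k
    show (a.1 : R p) ((k + -i) + i) = (a.1 : R p) k
    congr 1; ring
  right_inv a := by
    refine Prod.ext ?_ rfl
    ext k
    show (a.1 : R p) ((k + i) + -i) = (a.1 : R p) k
    congr 1; ring
  map_mul' a b := by
    refine Prod.ext ?_ ?_
    · ext k; show ((a.1 + b.1 : V p) : R p) (k + i) = (a.1 : R p) (k + i) + (b.1 : R p) (k + i)
      simp
    · show (a.2 + b.2 + β p a.1 b.1) = a.2 + b.2 + β p (shiftV p i a.1) (shiftV p i b.1)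
      rw [show ((shiftV p i a.1 : V p) : R p) = shiftF p i a.1 from rfl,
        show ((shiftV p i b.1 : V p) : R p) = shiftF p i b.1 from rfl, β_shift]

def refK (i : ZMod p) : K p ≃* K p where
  toFun a := (flipV p i a.1, a.2 + β p a.1 a.1)
  invFun a := (flipV p i a.1, a.2 + β p a.1 a.1)
  left_inv a := by
    refine Prod.ext ?_ ?_
    · ext k
      show (a.1 : R p) (i - (i - k)) = (a.1 : R p) k
      congr 1; ring
    · show a.2 + β p a.1 a.1 + β p (flipV p i a.1) (flipV p i a.1) = a.2
      rw [show ((flipV p i a.1 : V p) : R p) = flipF p i a.1 from rfl, β_flip]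
      rw [add_assoc, add_self_zero, add_zero]
  right_inv a := by
    refine Prod.ext ?_ ?_
    · ext k
      show (a.1 : R p) (i - (i - k)) = (a.1 : R p) k
      congr 1; ring
    · show a.2 + β p a.1 a.1 + β p (flipV p i a.1) (flipV p i a.1) = a.2
      rw [show ((flipV p i a.1 : V p) : R p) = flipF p i a.1 from rfl, β_flip]
      rw [add_assoc, add_self_zero, add_zero]
  map_mul' a b := by
    refine Prod.ext ?_ ?_
    · ext k
      show ((a.1 + b.1 : V p) : R p) (i - k) = (a.1 : R p) (i - k) + (b.1 : R p) (i - k)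
      simp
    · show a.2 + b.2 + β p a.1 b.1 + β p (↑(a.1 + b.1)) (↑(a.1 + b.1))
        = (a.2 + β p a.1 a.1) + (b.2 + β p b.1 b.1) + β p (flipV p i a.1) (flipV p i b.1)
      rw [show ((flipV p i a.1 : V p) : R p) = flipF p i a.1 from rfl,
        show ((flipV p i b.1 : V p) : R p) = flipF p i b.1 from rfl, β_flip]
      push_cast
      rw [β_add_left, β_add_right, β_add_right]
      have h := add_self_zero (β p (a.1 : R p) (b.1 : R p))
      calc a.2 + b.2 + β p (a.1:R p) b.1 + (β p (a.1:R p) a.1 + β p (a.1:R p) b.1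
            + (β p (b.1:R p) a.1 + β p (b.1:R p) b.1))
          = (a.2 + β p (a.1:R p) a.1) + (b.2 + β p (b.1:R p) b.1) + β p (b.1:R p) a.1
            + (β p (a.1:R p) b.1 + β p (a.1:R p) b.1) := by ring
        _ = (a.2 + β p (a.1:R p) a.1) + (b.2 + β p (b.1:R p) b.1) + β p (b.1:R p) a.1 := by
            rw [h, add_zero]

open DihedralGroup in
def θfun : DihedralGroup p → MulAut (K p)
  | .r i => rotK p i
  | .sr i => refK p i

open DihedralGroup in
def θ : DihedralGroup p →* MulAut (K p) where
  toFun := θfun p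
  map_one' := by
    show rotK p 0 = 1
    apply MulEquiv.ext
    intro a
    refine Prod.ext ?_ rfl
    ext k
    show (a.1 : R p) (k + 0) = (a.1 : R p) k
    rw [add_zero]
  map_mul' := by
    rintro (i | i) (j | j) <;> apply MulEquiv.ext <;> intro a
    · show rotK p (i + j) a = rotK p i (rotK p j a)
      refine Prod.ext ?_ rfl
      ext k
      show (a.1 : R p) (k + (i + j)) = (a.1 : R p) ((k + i) + j)
      congr 1; ring
    · show refK p (j - i) a = rotK p i (refK p j a)
      refine Prod.ext ?_ rfl
      ext k
      show (a.1 : R p) ((j - i) - k) = (a.1 : R p) (j - (k + i))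
      congr 1; ring
    · show refK p (i + j) a = refK p i (rotK p j a)
      refine Prod.ext ?_ ?_
      · ext k
        show (a.1 : R p) ((i + j) - k) = (a.1 : R p) ((i - k) + j)
        congr 1; ring
      · show a.2 + β p a.1 a.1 = a.2 + β p (shiftV p j a.1) (shiftV p j a.1)
        rw [show ((shiftV p j a.1 : V p) : R p) = shiftF p j a.1 from rfl, β_shift]
    · show rotK p (j - i) a = refK p i (refK p j a)
      refine Prod.ext ?_ ?_
      · ext k
        show (a.1 : R p) (k + (j - i)) = (a.1 : R p) (j - (i - k))
        congr 1; ring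
      · show a.2 = a.2 + β p a.1 a.1 + β p (flipV p j a.1) (flipV p j a.1)
        rw [show ((flipV p j a.1 : V p) : R p) = flipF p j a.1 from rfl, β_flip,
          add_assoc, add_self_zero, add_zero]

abbrev Γ := SemidirectProduct (K p) (DihedralGroup p) (θ p)

-- χ indicator
def χ (u : ZMod p) : F2 := if u = 0 then 1 else 0

lemma χ_neg (u : ZMod p) : χ p (-u) = χ p u := by simp [χ, neg_eq_zero]

lemma F2_two_mul (x : F2) : 2 * x = 0 := by
  have : (2 : F2) = 0 := rfl
  rw [this, zero_mul]

lemma F2_mul_two (x : F2) : x * 2 = 0 := by rw [mul_comm]; exact F2_two_mul x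

def cF (j : ZMod p) : R p := fun k => χ p (k) + χ p (k - j)

lemma sum_χ_sub (j : ZMod p) : ∑ k, χ p (k - j) = 1 := by
  have h : ∀ k : ZMod p, χ p (k - j) = if k = j then 1 else 0 := by
    intro k; simp [χ, sub_eq_zero]
  simp [h]

lemma cF_mem (j : ZMod p) : cF p j ∈ V p := by
  show ∑ k, (χ p k + χ p (k - j)) = 0
  rw [Finset.sum_add_distrib]
  have h0 : ∑ k : ZMod p, χ p k = 1 := by
    have := sum_χ_sub p 0; simpa using this
  rw [h0, sum_χ_sub, add_self_zero]

def cV (j : ZMod p) : V p := ⟨cF p j, cF_mem p j⟩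

lemma sum_mul_ind (m : R p) (c : ZMod p) :
    (∑ k, m k * (if k = c then (1 : F2) else 0)) = m c := by
  simp [mul_ite]

lemma β_eval_right (m : R p) (j : ZMod p) : β p m (cF p j) = m (-2) + m (j - 2) := by
  have h : ∀ k : ZMod p, m k * cF p j (k + 2)
      = m k * (if k = -2 then (1:F2) else 0) + m k * (if k = (j - 2) then (1:F2) else 0) := by
    intro k
    rw [show cF p j (k + 2) = χ p (k + 2) + χ p (k + 2 - j) from rfl, mul_add]
    congr 2
    · simp only [χ]; congr 1; simp only [eq_iff_iff]
      constructor
      · intro h; linear_combination h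
      · intro h; linear_combination h
    · simp only [χ]; congr 1; simp only [eq_iff_iff]
      constructor
      · intro h; have : k = j - 2 := by linear_combination h
        exact this
      · intro h; linear_combination h
  rw [β, Finset.sum_congr rfl (fun k _ => h k), Finset.sum_add_distrib,
    sum_mul_ind, sum_mul_ind]

lemma β_eval_left (m : R p) (j : ZMod p) : β p (cF p j) m = m 2 + m (j + 2) := by
  have h : ∀ k : ZMod p, cF p j k * m (k + 2)
      = (if k = 0 then (1:F2) else 0) * m (k + 2) + (if k = j then (1:F2) else 0) * m (k + 2) := by
    intro k
    rw [show cF p j k = χ p k + χ p (k - j) from rfl, add_mul]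
    congr 2
    simp only [χ]; congr 1; simp only [eq_iff_iff, sub_eq_zero]
  rw [β, Finset.sum_congr rfl (fun k _ => h k), Finset.sum_add_distrib]
  have h1 : (∑ k : ZMod p, (if k = (0:ZMod p) then (1:F2) else 0) * m (k + 2)) = m 2 := by
    simp [ite_mul]
  have h2 : (∑ k : ZMod p, (if k = j then (1:F2) else 0) * m (k + 2)) = m (j + 2) := by
    simp [ite_mul]
  rw [h1, h2]

def Lf (m : R p) : F2 := m 2 + m (-2)

def ψ₀ : K p ≃* K p where
  toFun a := (a.1, a.2 + Lf p a.1)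
  invFun a := (a.1, a.2 + Lf p a.1)
  left_inv a := by
    refine Prod.ext rfl ?_
    show a.2 + Lf p a.1 + Lf p a.1 = a.2
    rw [add_assoc, add_self_zero, add_zero]
  right_inv a := by
    refine Prod.ext rfl ?_
    show a.2 + Lf p a.1 + Lf p a.1 = a.2
    rw [add_assoc, add_self_zero, add_zero]
  map_mul' a b := by
    refine Prod.ext rfl ?_
    show a.2 + b.2 + β p a.1 b.1 + Lf p (↑(a.1 + b.1))
      = (a.2 + Lf p a.1) + (b.2 + Lf p b.1) + β p a.1 b.1
    have : Lf p (↑(a.1 + b.1)) = Lf p a.1 + Lf p b.1 := by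
      simp only [Lf, AddSubgroup.coe_add, Pi.add_apply]
      ring
    rw [this]; ring

open DihedralGroup in
def T : DihedralGroup p → K p
  | .r i => (cV p (-i), χ p (-i - 2))
  | .sr i => (cV p i, χ p (i - 2))

lemma χ_eq_zero {u : ZMod p} (h : u ≠ 0) : χ p u = 0 := if_neg h

lemma χ_sub_comm (u w : ZMod p) : χ p (u - w) = χ p (w - u) := by
  rw [show w - u = -(u - w) by ring, χ_neg]

lemma M_rot (a b k : ZMod p) : cF p (b - a) k = cF p (-a) k + cF p b (k + a) := by
  show χ p k + χ p (k - (b-a)) = (χ p k + χ p (k - -a)) + (χ p (k+a) + χ p (k + a - b))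
  rw [show k - (b - a) = k + a - b by ring, show k - -a = k + a by ring]
  ring_nf
  simp [F2_two_mul, F2_mul_two]

lemma M_flip (a b k : ZMod p) : cF p (a + b) k = cF p a k + cF p (-b) (a - k) := by
  show χ p k + χ p (k - (a+b)) = (χ p k + χ p (k - a)) + (χ p (a-k) + χ p (a - k - -b))
  rw [show a - k - -b = -(k - (a+b)) by ring, χ_neg, χ_sub_comm p a k]
  ring_nf
  simp [F2_two_mul, F2_mul_two]

lemma shiftV_cV (i j k : ZMod p) : ((shiftV p i (cV p j) : V p) : R p) k = cF p j (k + i) := rfl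
lemma flipV_cV (i j k : ZMod p) : ((flipV p i (cV p j) : V p) : R p) k = cF p j (i - k) := rfl

@[simp] lemma shiftF_apply (i : ZMod p) (m : R p) (k : ZMod p) :
    shiftF p i m k = m (k + i) := rfl
@[simp] lemma flipF_apply (i : ZMod p) (m : R p) (k : ZMod p) :
    flipF p i m k = m (i - k) := rfl
@[simp] lemma cF_apply (j k : ZMod p) : cF p j k = χ p k + χ p (k - j) := rfl

open DihedralGroup in
lemma Tcoc (h2 : (2:ZMod p) ≠ 0) (h h' : DihedralGroup p) :
    T p (h * h') = T p h * (θ p h) (T p h') := by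
  have hn2 : (-2 : ZMod p) ≠ 0 := by simpa using h2
  have hz2 : χ p 2 = 0 := χ_eq_zero p h2
  have hzn2 : χ p (-2) = 0 := χ_eq_zero p hn2
  obtain (i | i) := h <;> obtain (j | j) := h'
  · show (cV p (-(i+j)), χ p (-(i+j) - 2))
      = (cV p (-i) + shiftV p i (cV p (-j)),
         χ p (-i - 2) + χ p (-j - 2) + β p (cF p (-i)) (shiftF p i (cF p (-j))))
    refine Prod.ext ?_ ?_
    · ext k
      show cF p (-(i+j)) k = cF p (-i) k + cF p (-j) (k + i)
      rw [show -(i+j) = -j - i by ring, M_rot]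
    · show χ p (-(i+j) - 2) = χ p (-i - 2) + χ p (-j - 2)
        + β p (cF p (-i)) (shiftF p i (cF p (-j)))
      rw [β_eval_left p (shiftF p i (cF p (-j))) (-i)]
      simp only [shiftF_apply, cF_apply]
      have e1 : χ p (-(i+j) - 2) = χ p (i+j+2) := by
        rw [show -(i+j) - 2 = -(i+j+2) by ring, χ_neg]
      have e2 : χ p (-i - 2) = χ p (i+2) := by
        rw [show -i - 2 = -(i+2) by ring, χ_neg]
      have e3 : χ p (-j - 2) = χ p (j+2) := by
        rw [show -j - 2 = -(j+2) by ring, χ_neg]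
      have e4 : χ p (2 + i - -j) = χ p (i+j+2) := by rw [show (2:ZMod p) + i - -j = i+j+2 by ring]
      have e5 : χ p (-i + 2 + i - -j) = χ p (j+2) := by
        rw [show -i + 2 + i - -j = j+2 by ring]
      have e6 : χ p (-i + 2 + i) = 0 := by
        rw [show -i + 2 + i = (2:ZMod p) by ring]; exact hz2
      have e7 : χ p (2 + i) = χ p (i + 2) := by rw [show (2:ZMod p) + i = i + 2 by ring]
      simp only [e1, e2, e3, e4, e5, e6, e7]
      ring_nf
      simp [F2_two_mul, F2_mul_two]
  · show (cV p (j - i), χ p ((j - i) - 2))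
      = (cV p (-i) + shiftV p i (cV p j),
         χ p (-i - 2) + χ p (j - 2) + β p (cF p (-i)) (shiftF p i (cF p j)))
    refine Prod.ext ?_ ?_
    · ext k
      show cF p (j - i) k = cF p (-i) k + cF p j (k + i)
      rw [M_rot]
    · show χ p ((j - i) - 2) = χ p (-i - 2) + χ p (j - 2)
        + β p (cF p (-i)) (shiftF p i (cF p j))
      rw [β_eval_left p (shiftF p i (cF p j)) (-i)]
      simp only [shiftF_apply, cF_apply]
      have e2 : χ p (-i - 2) = χ p (i+2) := by
        rw [show -i - 2 = -(i+2) by ring, χ_neg]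
      have e4 : χ p (2 + i - j) = χ p (j - i - 2) := by
        rw [show (2:ZMod p) + i - j = -(j-i-2) by ring, χ_neg]
      have e5 : χ p (-i + 2 + i - j) = χ p (j-2) := by
        rw [show -i + 2 + i - j = -(j-2) by ring, χ_neg]
      have e6 : χ p (-i + 2 + i) = 0 := by
        rw [show -i + 2 + i = (2:ZMod p) by ring]; exact hz2
      have e7 : χ p (2 + i) = χ p (i + 2) := by rw [show (2:ZMod p) + i = i + 2 by ring]
      simp only [e2, e4, e5, e6, e7]
      ring_nf
      simp [F2_two_mul, F2_mul_two]
  · show (cV p (i + j), χ p ((i+j) - 2))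
      = (cV p i + flipV p i (cV p (-j)),
         χ p (i - 2) + (χ p (-j - 2) + β p (cF p (-j)) (cF p (-j)))
           + β p (cF p i) (flipF p i (cF p (-j))))
    refine Prod.ext ?_ ?_
    · ext k
      show cF p (i + j) k = cF p i k + cF p (-j) (i - k)
      rw [M_flip]
    · show χ p ((i+j) - 2) = χ p (i - 2) + (χ p (-j - 2) + β p (cF p (-j)) (cF p (-j)))
        + β p (cF p i) (flipF p i (cF p (-j)))
      rw [β_eval_right p (cF p (-j)) (-j), β_eval_left p (flipF p i (cF p (-j))) i]
      simp only [flipF_apply, cF_apply]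
      have e1 : χ p (-j-2) = χ p (j+2) := by rw [show -j - 2 = -(j+2) by ring, χ_neg]
      have e2 : χ p (-2 - -j) = χ p (j-2) := by rw [show (-2:ZMod p) - -j = j-2 by ring]
      have e3 : χ p (-j - 2 - -j) = 0 := by
        rw [show -j - 2 - -j = (-2 : ZMod p) by ring]; exact hzn2
      have e4 : χ p (i - 2 - -j) = χ p (i + j - 2) := by
        rw [show i - 2 - -j = i + j - 2 by ring]
      have e5 : χ p (i - (i + 2)) = 0 := by
        rw [show i - (i+2) = (-2 : ZMod p) by ring]; exact hzn2
      have e6 : χ p (i - (i + 2) - -j) = χ p (j - 2) := by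
        rw [show i - (i+2) - -j = j - 2 by ring]
      simp only [e1, e2, e3, e4, e5, e6, hzn2]
      ring_nf
      simp [F2_two_mul, F2_mul_two]
  · show (cV p (-(j - i)), χ p (-(j - i) - 2))
      = (cV p i + flipV p i (cV p j),
         χ p (i - 2) + (χ p (j - 2) + β p (cF p j) (cF p j))
           + β p (cF p i) (flipF p i (cF p j)))
    refine Prod.ext ?_ ?_
    · ext k
      show cF p (-(j - i)) k = cF p i k + cF p j (i - k)
      rw [show -(j - i) = i + -j by ring, M_flip, neg_neg]
    · show χ p (-(j - i) - 2) = χ p (i - 2) + (χ p (j - 2) + β p (cF p j) (cF p j))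
        + β p (cF p i) (flipF p i (cF p j))
      rw [β_eval_right p (cF p j) j, β_eval_left p (flipF p i (cF p j)) i]
      simp only [flipF_apply, cF_apply]
      have e0 : χ p (-(j-i) - 2) = χ p (i - j - 2) := by
        rw [show -(j-i) - 2 = i - j - 2 by ring]
      have e1 : χ p (-2 - j) = χ p (j+2) := by rw [show (-2:ZMod p) - j = -(j+2) by ring, χ_neg]
      have e2 : χ p (j - 2 - j) = 0 := by
        rw [show j - 2 - j = (-2:ZMod p) by ring]; exact hzn2
      have e3 : χ p (i - 2 - j) = χ p (i - j - 2) := by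
        rw [show i - 2 - j = i - j - 2 by ring]
      have e4 : χ p (i - (i + 2)) = 0 := by
        rw [show i - (i+2) = (-2 : ZMod p) by ring]; exact hzn2
      have e5 : χ p (i - (i + 2) - j) = χ p (j + 2) := by
        rw [show i - (i+2) - j = -(j+2) by ring, χ_neg]
      simp only [e0, e1, e2, e3, e4, e5, hzn2]
      ring_nf
      simp [F2_two_mul, F2_mul_two]

open DihedralGroup in
lemma TB (h : DihedralGroup p) (a : K p) :
    T p h * (θ p h) (ψ₀ p a) = ψ₀ p ((θ p h) a) * T p h := by
  obtain (i | i) := h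
  · show (cV p (-i) + shiftV p i a.1,
        χ p (-i-2) + (a.2 + Lf p a.1) + β p (cF p (-i)) (shiftF p i a.1))
      = (shiftV p i a.1 + cV p (-i),
        (a.2 + Lf p (shiftF p i (a.1 : R p))) + χ p (-i-2) + β p (shiftF p i a.1) (cF p (-i)))
    refine Prod.ext (by rw [add_comm]) ?_
    rw [β_eval_left p (shiftF p i (a.1 : R p)) (-i), β_eval_right p (shiftF p i (a.1 : R p)) (-i)]
    simp only [shiftF_apply, Lf]
    have e1 : (a.1 : R p) (-i + 2 + i) = (a.1 : R p) 2 := by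
      rw [show -i + 2 + i = (2:ZMod p) by ring]
    have e2 : (a.1 : R p) (-i - 2 + i) = (a.1 : R p) (-2) := by
      rw [show -i - 2 + i = (-2:ZMod p) by ring]
    rw [e1, e2]
    ring_nf
    simp [F2_two_mul, F2_mul_two]
  · show (cV p i + flipV p i a.1,
        χ p (i-2) + (a.2 + Lf p a.1 + β p a.1 a.1) + β p (cF p i) (flipF p i a.1))
      = (flipV p i a.1 + cV p i,
        (a.2 + β p a.1 a.1 + Lf p (flipF p i (a.1 : R p))) + χ p (i-2)
          + β p (flipF p i a.1) (cF p i))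
    refine Prod.ext (by rw [add_comm]) ?_
    rw [β_eval_left p (flipF p i (a.1 : R p)) i, β_eval_right p (flipF p i (a.1 : R p)) i]
    simp only [flipF_apply, Lf]
    have e1 : (a.1 : R p) (i - (i + 2)) = (a.1 : R p) (-2) := by
      rw [show i - (i+2) = (-2:ZMod p) by ring]
    have e2 : (a.1 : R p) (i - (i - 2)) = (a.1 : R p) 2 := by
      rw [show i - (i-2) = (2:ZMod p) by ring]
    rw [e1, e2]
    ring_nf
    simp [F2_two_mul, F2_mul_two]

lemma ψ₀_invol (a : K p) : ψ₀ p (ψ₀ p a) = a := by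
  refine Prod.ext rfl ?_
  show a.2 + Lf p a.1 + Lf p a.1 = a.2
  rw [add_assoc, add_self_zero, add_zero]

def dd (h2 : (2:ZMod p) ≠ 0) : Γ p ≃* Γ p where
  toFun g := ⟨ψ₀ p g.left * T p g.right, g.right⟩
  invFun g := ⟨ψ₀ p (g.left * (T p g.right)⁻¹), g.right⟩
  left_inv g := by
    refine SemidirectProduct.ext ?_ rfl
    show ψ₀ p (ψ₀ p g.left * T p g.right * (T p g.right)⁻¹) = g.left
    rw [mul_inv_cancel_right, ψ₀_invol]
  right_inv g := by
    refine SemidirectProduct.ext ?_ rfl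
    show ψ₀ p (ψ₀ p (g.left * (T p g.right)⁻¹)) * T p g.right = g.left
    rw [ψ₀_invol, inv_mul_cancel_right]
  map_mul' g g' := by
    refine SemidirectProduct.ext ?_ rfl
    show ψ₀ p (g.left * (θ p g.right) g'.left) * T p (g.right * g'.right)
      = ψ₀ p g.left * T p g.right * (θ p g.right) (ψ₀ p g'.left * T p g'.right)
    rw [map_mul, Tcoc p h2, map_mul]
    calc ψ₀ p g.left * ψ₀ p ((θ p g.right) g'.left)
          * (T p g.right * (θ p g.right) (T p g'.right))
        = ψ₀ p g.left * (ψ₀ p ((θ p g.right) g'.left) * T p g.right)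
          * (θ p g.right) (T p g'.right) := by
          rw [mul_assoc, mul_assoc, mul_assoc]
      _ = ψ₀ p g.left * (T p g.right * (θ p g.right) (ψ₀ p g'.left))
          * (θ p g.right) (T p g'.right) := by rw [← TB]
      _ = ψ₀ p g.left * T p g.right
          * ((θ p g.right) (ψ₀ p g'.left) * (θ p g.right) (T p g'.right)) := by
          rw [mul_assoc, mul_assoc, mul_assoc]

open DihedralGroup

def ρ₀ : Γ p := ⟨1, sr 1⟩
def ρ₁ : Γ p := ⟨1, sr 0⟩
def ρ₂ : Γ p := ⟨(cV p 1, 0), sr 1⟩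

def ρv : Fin 3 → Γ p := ![ρ₀ p, ρ₁ p, ρ₂ p]

lemma mk_mul (n n' : K p) (g g' : DihedralGroup p) :
    (⟨n, g⟩ : Γ p) * ⟨n', g'⟩ = ⟨n * (θ p g) n', g * g'⟩ := rfl

lemma θ_r_apply (i : ZMod p) (a : K p) : (θ p (r i)) a = (shiftV p i a.1, a.2) := rfl
lemma θ_sr_apply (i : ZMod p) (a : K p) :
    (θ p (sr i)) a = (flipV p i a.1, a.2 + β p a.1 a.1) := rfl

section facts
variable (h1 : (1:ZMod p) ≠ 0) (h2 : (2:ZMod p) ≠ 0) (h3 : (3:ZMod p) ≠ 0)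

include h1 h2 h3 in
lemma β_vv : β p (cF p 1) (cF p 1) = 0 := by
  rw [β_eval_right p (cF p 1) 1]
  simp only [cF_apply]
  rw [show (-2:ZMod p) - 1 = -3 by ring, show (1:ZMod p) - 2 = -1 by ring,
    show (-1:ZMod p) - 1 = -2 by ring]
  simp [χ_neg, χ_eq_zero p h1, χ_eq_zero p h2, χ_eq_zero p h3]

include h1 h2 h3 in
lemma Lf_v : Lf p (cF p 1) = 0 := by
  show cF p 1 2 + cF p 1 (-2) = 0
  simp only [cF_apply]
  rw [show (2:ZMod p) - 1 = 1 by ring, show (-2:ZMod p) - 1 = -3 by ring]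
  simp [χ_neg, χ_eq_zero p h1, χ_eq_zero p h2, χ_eq_zero p h3]

lemma flip1_cV1 : flipV p 1 (cV p 1) = cV p 1 := by
  ext k
  show cF p 1 (1 - k) = cF p 1 k
  simp only [cF_apply]
  rw [show (1:ZMod p) - k - 1 = -k by ring, show (1:ZMod p) - k = -(k-1) by ring,
    χ_neg, χ_neg, add_comm]

lemma flip0_cV1 : flipV p 0 (cV p 1) = cV p (-1) := by
  ext k
  show cF p 1 (0 - k) = cF p (-1) k
  simp only [cF_apply]
  rw [show (0:ZMod p) - k - 1 = -(k+1) by ring, show (0:ZMod p) - k = -k by ring,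
    show k - -1 = k + 1 by ring, χ_neg, χ_neg]

lemma cV_zero : cV p 0 = 0 := by
  ext k
  show χ p k + χ p (k - 0) = 0
  rw [sub_zero, add_self_zero]

include h1 in
lemma cV_one_ne : cV p 1 ≠ 0 := by
  intro h
  have := congrFun (congrArg (Subtype.val) h) 1
  have h' : χ p (1:ZMod p) + χ p (1-1 : ZMod p) = 0 := this
  rw [sub_self] at h'
  simp [χ, h1] at h'

include h1 h2 h3 in
lemma kv_sq : ((cV p 1, 0) : K p) * (cV p 1, 0) = 1 := by
  rw [kmul_def]
  refine Prod.ext ?_ ?_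
  · show cV p 1 + cV p 1 = 0
    ext k
    exact add_self_zero _
  · show (0:F2) + 0 + β p (cF p 1) (cF p 1) = 0
    rw [β_vv p h1 h2 h3]; simp

lemma rho0_sq : ρ₀ p * ρ₀ p = 1 := by
  rw [ρ₀, mk_mul, map_one, mul_one, sr_mul_sr, sub_self]
  rfl

lemma rho1_sq : ρ₁ p * ρ₁ p = 1 := by
  rw [ρ₁, mk_mul, map_one, mul_one, sr_mul_sr, sub_self]
  rfl

include h1 h2 h3 in
lemma rho2_sq : ρ₂ p * ρ₂ p = 1 := by
  rw [ρ₂, mk_mul, θ_sr_apply]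
  show (⟨(cV p 1, 0) * (flipV p 1 (cV p 1), 0 + β p (cF p 1) (cF p 1)), sr 1 * sr 1⟩ : Γ p) = 1
  rw [flip1_cV1, β_vv p h1 h2 h3, sr_mul_sr, sub_self]
  show (⟨(cV p 1, 0) * (cV p 1, 0), r 0⟩ : Γ p) = 1
  rw [kv_sq p h1 h2 h3]
  rfl

lemma x_eq : ρ₀ p * ρ₁ p = ⟨1, r (-1)⟩ := by
  rw [ρ₀, ρ₁, mk_mul, map_one, mul_one, sr_mul_sr]
  norm_num

include h1 h2 h3 in
lemma y_eq : ρ₁ p * ρ₂ p = ⟨(cV p (-1), 0), r 1⟩ := by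
  rw [ρ₁, ρ₂, mk_mul, θ_sr_apply, one_mul, sr_mul_sr]
  show (⟨(flipV p 0 (cV p 1), 0 + β p (cF p 1) (cF p 1)), r (1 - 0)⟩ : Γ p) = _
  rw [flip0_cV1, β_vv p h1 h2 h3, sub_zero]
  norm_num

include h1 h2 h3 in
lemma rho02 : ρ₀ p * ρ₂ p = ⟨(cV p 1, 0), 1⟩ := by
  rw [ρ₀, ρ₂, mk_mul, θ_sr_apply, one_mul, sr_mul_sr, sub_self]
  show (⟨(flipV p 1 (cV p 1), 0 + β p (cF p 1) (cF p 1)), r 0⟩ : Γ p) = _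
  rw [flip1_cV1, β_vv p h1 h2 h3]
  norm_num

include h1 h2 h3 in
lemma rho20 : ρ₂ p * ρ₀ p = ⟨(cV p 1, 0), 1⟩ := by
  rw [ρ₂, ρ₀, mk_mul, map_one, mul_one, sr_mul_sr, sub_self]
  rfl

include h1 h2 h3 in
lemma rho02_sq : (ρ₀ p * ρ₂ p) * (ρ₀ p * ρ₂ p) = 1 := by
  rw [rho02 p h1 h2 h3, mk_mul]
  simp only [map_one, MulAut.one_apply, mul_one]
  rw [kv_sq p h1 h2 h3]
  rfl

include h1 h2 h3 in
lemma dd_rho0 : dd p h2 (ρ₀ p) = ρ₂ p := by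
  show (⟨ψ₀ p 1 * T p (sr 1), sr 1⟩ : Γ p) = ρ₂ p
  rw [map_one, one_mul]
  show (⟨(cV p 1, χ p (1 - 2)), sr 1⟩ : Γ p) = ρ₂ p
  rw [show (1:ZMod p) - 2 = -1 by ring, χ_neg, χ_eq_zero p h1]
  rfl

include h2 in
lemma dd_rho1 : dd p h2 (ρ₁ p) = ρ₁ p := by
  show (⟨ψ₀ p 1 * T p (sr 0), sr 0⟩ : Γ p) = ρ₁ p
  rw [map_one, one_mul]
  show (⟨(cV p 0, χ p (0 - 2)), sr 0⟩ : Γ p) = ρ₁ p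
  rw [show (0:ZMod p) - 2 = -2 by ring, χ_neg, χ_eq_zero p h2, cV_zero]
  rfl

include h1 h2 h3 in
lemma dd_rho2 : dd p h2 (ρ₂ p) = ρ₀ p := by
  show (⟨ψ₀ p (cV p 1, 0) * T p (sr 1), sr 1⟩ : Γ p) = ρ₀ p
  show (⟨((cV p 1, 0 + Lf p (cF p 1)) : K p) * (cV p 1, χ p (1-2)), sr 1⟩ : Γ p) = ρ₀ p
  rw [Lf_v p h1 h2 h3, kmul_def]
  refine SemidirectProduct.ext ?_ rfl
  show ((cV p 1 + cV p 1, 0 + χ p (1-2) + β p (cF p 1) (cF p 1)) : K p) = 1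
  rw [β_vv p h1 h2 h3, show (1:ZMod p) - 2 = -1 by ring, χ_neg, χ_eq_zero p h1]
  refine Prod.ext ?_ ?_
  · show cV p 1 + cV p 1 = 0
    ext k; exact add_self_zero _
  · show (0:F2) + 0 + 0 = 0
    simp

end facts

section orders
variable (h1 : (1:ZMod p) ≠ 0) (h2 : (2:ZMod p) ≠ 0) (h3 : (3:ZMod p) ≠ 0)

lemma rho0_ne_one : ρ₀ p ≠ 1 := by
  intro h
  have := congrArg SemidirectProduct.right h
  simp only [ρ₀] at this
  exact absurd this (by rw [SemidirectProduct.one_right, DihedralGroup.one_def]; intro h; cases h)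

lemma rho1_ne_one : ρ₁ p ≠ 1 := by
  intro h
  have := congrArg SemidirectProduct.right h
  simp only [ρ₁] at this
  exact absurd this (by rw [SemidirectProduct.one_right, DihedralGroup.one_def]; intro h; cases h)

lemma rho2_ne_one : ρ₂ p ≠ 1 := by
  intro h
  have := congrArg SemidirectProduct.right h
  simp only [ρ₂] at this
  exact absurd this (by rw [SemidirectProduct.one_right, DihedralGroup.one_def]; intro h; cases h)

lemma ord_rho0 : orderOf (ρ₀ p) = 2 :=
  orderOf_eq_prime (by rw [pow_two, rho0_sq]) (rho0_ne_one p)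

lemma ord_rho1 : orderOf (ρ₁ p) = 2 :=
  orderOf_eq_prime (by rw [pow_two, rho1_sq]) (rho1_ne_one p)

include h1 h2 h3 in
lemma ord_rho2 : orderOf (ρ₂ p) = 2 :=
  orderOf_eq_prime (by rw [pow_two, rho2_sq p h1 h2 h3]) (rho2_ne_one p)

lemma ord_r_neg_one : orderOf (r (-1) : DihedralGroup p) = p := by
  have : (r (-1) : DihedralGroup p) = (r 1)⁻¹ := rfl
  rw [this, orderOf_inv, orderOf_r_one]

lemma ord_x : orderOf (ρ₀ p * ρ₁ p) = p := by
  rw [x_eq]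
  have : (⟨1, r (-1)⟩ : Γ p) = SemidirectProduct.inr (r (-1)) := rfl
  rw [this, orderOf_injective (SemidirectProduct.inr) SemidirectProduct.inr_injective,
    ord_r_neg_one]

include h1 h2 h3 in
lemma dd_inr_r1 : dd p h2 (⟨1, r 1⟩ : Γ p) = ⟨(cV p (-1), 0), r 1⟩ := by
  show (⟨ψ₀ p 1 * T p (r 1), r 1⟩ : Γ p) = _
  rw [map_one, one_mul]
  show (⟨(cV p (-1), χ p (-1 - 2)), r 1⟩ : Γ p) = _
  rw [show (-1:ZMod p) - 2 = -3 by ring, χ_neg, χ_eq_zero p h3]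

include h1 h2 h3 in
lemma ord_y : orderOf (ρ₁ p * ρ₂ p) = p := by
  rw [y_eq p h1 h2 h3, ← dd_inr_r1 p h1 h2 h3]
  rw [show ((dd p h2) (⟨1, r 1⟩ : Γ p)) = (dd p h2).toMonoidHom (⟨1, r 1⟩ : Γ p) from rfl,
    orderOf_injective (dd p h2).toMonoidHom (dd p h2).injective]
  have : (⟨1, r 1⟩ : Γ p) = SemidirectProduct.inr (r 1) := rfl
  rw [this, orderOf_injective (SemidirectProduct.inr) SemidirectProduct.inr_injective,
    orderOf_r_one]

end orders

section nodual
variable (h1 : (1:ZMod p) ≠ 0) (h2 : (2:ZMod p) ≠ 0) (h3 : (3:ZMod p) ≠ 0)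

/-- the distinguished "all ones except at 0" vector -/
def wf : R p := fun k => 1 + χ p k

lemma sum_one : (∑ _k : ZMod p, (1:F2)) = (p : F2) := by
  rw [Finset.sum_const, Finset.card_univ, ZMod.card]
  simp

lemma sum_χ' : (∑ k : ZMod p, χ p k) = 1 := by
  have := sum_χ_sub p 0
  have h : ∀ k : ZMod p, χ p (k - 0) = χ p k := fun k => by rw [sub_zero]
  rw [Finset.sum_congr rfl (fun k _ => h k)] at this
  exact this

lemma sum_wf : (∑ k, wf p k) = (p : F2) + 1 := by
  rw [show (∑ k, wf p k) = ∑ k : ZMod p, ((1:F2) + χ p k) from rfl,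
    Finset.sum_add_distrib, sum_one, sum_χ']

include h2 in
lemma β_wf : β p (wf p) (wf p) = (p : F2) := by
  have hpt : ∀ k : ZMod p, wf p k * wf p (k + 2) = 1 + χ p k + χ p (k + 2) := by
    intro k
    show (1 + χ p k) * (1 + χ p (k+2)) = _
    have hz : χ p k * χ p (k+2) = 0 := by
      by_cases hk : k = 0
      · subst hk; rw [zero_add, χ_eq_zero p h2, mul_zero]
      · rw [χ_eq_zero p hk, zero_mul]
    linear_combination hz
  rw [β, Finset.sum_congr rfl (fun k _ => hpt k), Finset.sum_add_distrib,
    Finset.sum_add_distrib, sum_one, sum_χ']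
  have : (∑ k : ZMod p, χ p (k + 2)) = 1 := by
    have := sum_χ_sub p (-2)
    have h : ∀ k : ZMod p, χ p (k - (-2)) = χ p (k + 2) := fun k => by
      rw [sub_neg_eq_add]
    rw [Finset.sum_congr rfl (fun k _ => h k)] at this
    exact this
  rw [this]
  rw [add_assoc, add_self_zero, add_zero]

lemma const_of (u : R p) (h : ∀ k, u k = u (k - 1)) : ∀ k, u k = u 0 := by
  have key : ∀ n : ℕ, u (n : ZMod p) = u 0 := by
    intro n
    induction n with
    | zero => simp
    | succ m ih =>
      have : ((m+1 : ℕ) : ZMod p) - 1 = (m : ZMod p) := by push_cast; ring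
      rw [h ((m+1 : ℕ) : ZMod p), this, ih]
  intro k
  have : k = ((k.val : ℕ) : ZMod p) := by rw [ZMod.natCast_val, ZMod.cast_id]
  rw [this, key]

lemma X_eq : ρ₂ p * ρ₁ p = ⟨(cV p 1, 0), r (-1)⟩ := by
  rw [ρ₂, ρ₁, mk_mul, map_one, mul_one, sr_mul_sr]
  norm_num

include h1 h2 h3 in
theorem no_dualizing (α : Γ p) :
    ¬(α * ρ₀ p * α⁻¹ = ρ₂ p ∧ α * ρ₁ p * α⁻¹ = ρ₁ p ∧ α * ρ₂ p * α⁻¹ = ρ₀ p) := by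
  rintro ⟨hA0, hA1, -⟩
  have hx : α * (ρ₀ p * ρ₁ p) = (ρ₂ p * ρ₁ p) * α := by
    have : (α * ρ₀ p * α⁻¹) * (α * ρ₁ p * α⁻¹) = ρ₂ p * ρ₁ p := by rw [hA0, hA1]
    calc α * (ρ₀ p * ρ₁ p) = ((α * ρ₀ p * α⁻¹) * (α * ρ₁ p * α⁻¹)) * α := by group
    _ = (ρ₂ p * ρ₁ p) * α := by rw [this]
  have hr1 : α * ρ₁ p = ρ₁ p * α := by
    calc α * ρ₁ p = (α * ρ₁ p * α⁻¹) * α := by group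
    _ = ρ₁ p * α := by rw [hA1]
  rw [x_eq p, X_eq p] at hx
  obtain ⟨⟨w, aa⟩, (i | i)⟩ := α
  · -- rotation case
    -- component equations from hx
    have hxl := congrArg SemidirectProduct.left hx
    have hxr := congrArg SemidirectProduct.right hx
    -- left of LHS : (w,aa) * θ(r i) 1 = (w,aa);  right : r (i + -1)
    -- left of RHS : (cV 1, 0) * θ(r (-1)) (w,aa) = (cV 1 + shiftV (-1) w, ...)
    simp only [SemidirectProduct.mul_left, map_one, mul_one] at hxl
    rw [θ_r_apply] at hxl
    have hfst : w = cV p 1 + shiftV p (-1) w := by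
      have := congrArg Prod.fst hxl
      simpa [kmul_def] using this
    -- ρ₁ relation components
    have hr1l := congrArg SemidirectProduct.left hr1
    simp only [ρ₁, SemidirectProduct.mul_left, map_one, mul_one, one_mul] at hr1l
    rw [θ_sr_apply] at hr1l
    have hsnd : β p (w : R p) (w : R p) = 0 := by
      have h' : aa = aa + β p (w : R p) (w : R p) := congrArg Prod.snd hr1l
      have h'' : aa + β p (w : R p) (w : R p) = aa + 0 := by rw [add_zero]; exact h'.symm
      exact add_left_cancel h''
    -- classify w
    set u : R p := fun k => (w : R p) k + wf p k with hu
    have hrec : ∀ k, u k = u (k - 1) := by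
      intro k
      have hw : (w : R p) k = cF p 1 k + (w : R p) (k + -1) := by
        have := congrFun (congrArg Subtype.val hfst) k
        simpa [cV] using this
      have hwf : wf p k + wf p (k - 1) = cF p 1 k := by
        show (1 + χ p k) + (1 + χ p (k-1)) = χ p k + χ p (k - 1)
        linear_combination (add_self_zero (1:F2))
      show (w : R p) k + wf p k = (w : R p) (k-1) + wf p (k-1)
      rw [hw, show k + -1 = k - 1 by ring]
      have : cF p 1 k = wf p k + wf p (k - 1) := hwf.symm
      rw [this]
      linear_combination (add_self_zero (wf p k))
    have hconst := const_of p u hrec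
    have hcases : u 0 = 0 ∨ u 0 = 1 := by
      have : ∀ z : F2, z = 0 ∨ z = 1 := by decide
      exact this _
    have hwval : ∀ k, (w : R p) k = wf p k + u 0 := by
      intro k
      have h' : (w : R p) k + wf p k = u 0 := hconst k
      linear_combination h' - (add_self_zero (wf p k))
    have hsum : (∑ k, (w : R p) k) = 0 := w.2
    rcases hcases with hc | hc
    · -- w = wf : use β w w = 0 and sum w = 0
      have hwwf : ∀ k, (w : R p) k = wf p k := by
        intro k; rw [hwval k, hc, add_zero]
      have hweq : (w : R p) = wf p := funext hwwf
      rw [hweq] at hsnd hsum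
      rw [β_wf p h2] at hsnd
      rw [sum_wf] at hsum
      rw [hsnd, zero_add] at hsum
      exact one_ne_zero hsum
    · -- w = χ : contradict sum = 0
      have hwχ : ∀ k, (w : R p) k = χ p k := by
        intro k
        rw [hwval k, hc]
        show 1 + χ p k + 1 = χ p k
        linear_combination (add_self_zero (1:F2))
      rw [funext hwχ] at hsum
      rw [sum_χ'] at hsum
      exact one_ne_zero hsum
  · -- reflection case : compare right components
    have hxr := congrArg SemidirectProduct.right hx
    have : sr (i + -1) = sr (i - -1) := by
      simpa [SemidirectProduct.mul_right, sr_mul_r, r_mul_sr] using hxr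
    have h11 : i + -1 = i - -1 := by
      injection this
    have : (2 : ZMod p) = 0 := by linear_combination -h11
    exact h2 this

end nodual

/-- Klein four subgroup on two commuting involutions -/
def klein {G : Type*} [Group G] (a b : G) (ha : a * a = 1) (hb : b * b = 1)
    (hc : a * b = b * a) : Subgroup G where
  carrier := {1, a, b, a * b}
  one_mem' := by left; rfl
  mul_mem' := by
    have e1 : a * (a * b) = b := by rw [← mul_assoc, ha, one_mul]
    have e2 : b * (a * b) = a := by rw [hc, ← mul_assoc, hb, one_mul]
    have e3 : (a * b) * a = b := by
      rw [mul_assoc, ← hc, ← mul_assoc, ha, one_mul]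
    have e4 : (a * b) * b = a := by rw [mul_assoc, hb, mul_one]
    have e5 : (a * b) * (a * b) = 1 := by rw [← mul_assoc, e3, hb]
    rintro x y (rfl | rfl | rfl | rfl) (rfl | rfl | rfl | rfl) <;>
      simp only [Set.mem_insert_iff, Set.mem_singleton_iff, one_mul, mul_one,
        ha, hb, e1, e2, e3, e4, e5] <;> tauto
  inv_mem' := by
    have e5 : (a * b) * (a * b) = 1 := by
      rw [mul_assoc, ← mul_assoc b, ← hc, ← mul_assoc, ← mul_assoc, ha, one_mul, hb]
    rintro x (rfl | rfl | rfl | rfl) <;>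
      simp only [Set.mem_insert_iff, Set.mem_singleton_iff]
    · left; exact inv_one
    · right; left; exact inv_eq_of_mul_eq_one_left ha
    · right; right; left; exact inv_eq_of_mul_eq_one_left hb
    · right; right; right; exact inv_eq_of_mul_eq_one_left e5

section subgroups
variable (h1 : (1:ZMod p) ≠ 0) (h2 : (2:ZMod p) ≠ 0) (h3 : (3:ZMod p) ≠ 0)

def sgD : Subgroup (Γ p) := (SemidirectProduct.inr (φ := θ p)).range

lemma mem_sgD (x : Γ p) : x ∈ sgD p ↔ x.left = 1 := by
  constructor
  · rintro ⟨h, rfl⟩; rfl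
  · intro hx
    exact ⟨x.right, SemidirectProduct.ext hx.symm rfl⟩

def sg12 (h2 : (2:ZMod p) ≠ 0) : Subgroup (Γ p) :=
  Subgroup.map (dd p h2).toMonoidHom (sgD p)

lemma dd_inr (h : DihedralGroup p) :
    dd p h2 (SemidirectProduct.inr h) = ⟨T p h, h⟩ := by
  show (⟨ψ₀ p 1 * T p h, h⟩ : Γ p) = _
  rw [map_one, one_mul]

lemma mem_sg12 (x : Γ p) : x ∈ sg12 p h2 ↔ x.left = T p x.right := by
  constructor
  · rintro ⟨y, hy, rfl⟩
    obtain ⟨h, rfl⟩ := hy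
    rw [show (dd p h2).toMonoidHom (SemidirectProduct.inr h) = (⟨T p h, h⟩ : Γ p) from
      dd_inr p h2 h]
  · intro hx
    refine ⟨SemidirectProduct.inr x.right, ⟨x.right, rfl⟩, ?_⟩
    rw [show (dd p h2).toMonoidHom (SemidirectProduct.inr x.right)
      = (⟨T p x.right, x.right⟩ : Γ p) from dd_inr p h2 x.right]
    exact SemidirectProduct.ext hx.symm rfl

lemma χ_eq_one {u : ZMod p} (h : χ p u = 1) : u = 0 := by
  by_contra hu
  rw [χ_eq_zero p hu] at h
  exact (by decide : ¬((0:F2) = 1)) h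

lemma cV_eq_zero {j : ZMod p} (h : cV p j = 0) : j = 0 := by
  have := congrFun (congrArg Subtype.val h) j
  have h' : χ p j + χ p (j - j) = 0 := this
  rw [sub_self] at h'
  have hχ : χ p 0 = 1 := if_pos rfl
  rw [hχ] at h'
  by_contra hj
  rw [χ_eq_zero p hj, zero_add] at h'
  exact one_ne_zero h'

open DihedralGroup in
include h2 in
lemma T_eq_one {h : DihedralGroup p} (hT : T p h = 1) : h = r 0 ∨ h = sr 0 := by
  obtain (i | i) := h
  · left
    have := congrArg Prod.fst hT
    have h' : cV p (-i) = 0 := this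
    have := cV_eq_zero p h'
    rw [show i = 0 from by linear_combination -this]
  · right
    have := congrArg Prod.fst hT
    have h' : cV p i = 0 := this
    rw [cV_eq_zero p h']

include h2 in
lemma T_sr0 : T p (sr 0) = 1 := by
  show ((cV p 0, χ p (0 - 2)) : K p) = 1
  rw [cV_zero, show (0:ZMod p) - 2 = -2 by ring, χ_neg, χ_eq_zero p h2]
  rfl

-- closure characterizations
open Subgroup

lemma rho10 : ρ₁ p * ρ₀ p = SemidirectProduct.inr (r 1) := by
  rw [ρ₁, ρ₀, mk_mul, map_one, mul_one, sr_mul_sr]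
  norm_num

lemma clo01 : closure {ρ₀ p, ρ₁ p} = sgD p := by
  apply le_antisymm
  · rw [closure_le]
    rintro x (rfl | rfl)
    · exact ⟨sr 1, rfl⟩
    · exact ⟨sr 0, rfl⟩
  · rintro x ⟨h, rfl⟩
    have hr : ∀ j : ZMod p, (SemidirectProduct.inr (r j) : Γ p) ∈ closure {ρ₀ p, ρ₁ p} := by
      intro j
      have hpow : (SemidirectProduct.inr (r 1) : Γ p) ^ (j.val) = SemidirectProduct.inr (r j) := by
        rw [← map_pow, r_one_pow, ZMod.natCast_val, ZMod.cast_id]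
      rw [← hpow, ← rho10]
      exact pow_mem (mul_mem (subset_closure (by right; rfl))
        (subset_closure (by left; rfl))) _
    obtain (j | j) := h
    · exact hr j
    · have : (SemidirectProduct.inr (sr j) : Γ p) = ρ₀ p * SemidirectProduct.inr (r (j - 1)) := by
        rw [ρ₀, show (SemidirectProduct.inr (r (j-1)) : Γ p) = ⟨1, r (j-1)⟩ from rfl, mk_mul,
          map_one, mul_one, sr_mul_r, show (1:ZMod p) + (j-1) = j by ring]
        rfl
      rw [this]
      exact mul_mem (subset_closure (by left; rfl)) (hr _)

include h1 h3 in
lemma clo12 : closure {ρ₁ p, ρ₂ p} = sg12 p h2 := by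
  rw [sg12, ← clo01, MonoidHom.map_closure]
  congr 1
  rw [Set.image_pair]
  rw [show (dd p h2).toMonoidHom (ρ₀ p) = ρ₂ p from dd_rho0 p h1 h2 h3,
    show (dd p h2).toMonoidHom (ρ₁ p) = ρ₁ p from dd_rho1 p h2]
  exact Set.pair_comm _ _

include h1 h2 h3 in
lemma clo02 : closure {ρ₀ p, ρ₂ p}
    = klein (ρ₀ p) (ρ₂ p) (rho0_sq p) (rho2_sq p h1 h2 h3)
        ((rho02 p h1 h2 h3).trans (rho20 p h1 h2 h3).symm) := by
  apply le_antisymm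
  · rw [closure_le]
    rintro x (rfl | rfl)
    · right; left; rfl
    · right; right; left; rfl
  · rintro x (rfl | rfl | rfl | rfl)
    · exact one_mem _
    · exact subset_closure (by left; rfl)
    · exact subset_closure (by right; rfl)
    · exact mul_mem (subset_closure (by left; rfl)) (subset_closure (by right; rfl))

lemma clo_single (g : Γ p) (hg : g * g = 1) :
    closure {g} = klein g 1 hg (one_mul 1) (by rw [one_mul, mul_one]) := by
  apply le_antisymm
  · rw [closure_le]
    rintro x rfl
    right; left; rfl
  · rintro x (rfl | rfl | rfl | rfl)
    · exact one_mem _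
    · exact subset_closure rfl
    · exact one_mem _
    · rw [mul_one]; exact subset_closure rfl

end subgroups

section inters
open Subgroup DihedralGroup
variable (h1 : (1:ZMod p) ≠ 0) (h2 : (2:ZMod p) ≠ 0) (h3 : (3:ZMod p) ≠ 0)

lemma mem_clo_single (g : Γ p) (hg : g * g = 1) (x : Γ p) :
    x ∈ closure {g} ↔ (x = 1 ∨ x = g) := by
  rw [clo_single p g hg]
  constructor
  · rintro (rfl | rfl | rfl | rfl)
    · left; rfl
    · right; rfl
    · left; rfl
    · right; exact mul_one g
  · rintro (rfl | rfl)
    · left; rfl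
    · right; left; rfl

include h1 h2 h3 in
lemma mem_clo02 (x : Γ p) :
    x ∈ closure {ρ₀ p, ρ₂ p} ↔ (x = 1 ∨ x = ρ₀ p ∨ x = ρ₂ p ∨ x = ρ₀ p * ρ₂ p) := by
  rw [clo02 p h1 h2 h3]
  exact Iff.rfl

include h1 in
lemma kv_ne_one : ((cV p 1, 0) : K p) ≠ 1 := by
  intro h
  exact cV_one_ne p h1 (congrArg Prod.fst h)

include h1 in
lemma rho2_left_ne : (ρ₂ p).left ≠ 1 := kv_ne_one p h1

include h1 h2 h3 in
lemma rho02_left_ne : (ρ₀ p * ρ₂ p).left ≠ 1 := by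
  rw [rho02 p h1 h2 h3]
  exact kv_ne_one p h1

include h1 in
lemma T_sr1 : T p (sr 1) = ((cV p 1, 0) : K p) := by
  show ((cV p 1, χ p (1 - 2)) : K p) = _
  rw [show (1:ZMod p) - 2 = -1 by ring, χ_neg, χ_eq_zero p h1]

include h1 h2 h3 in
lemma I1 : closure {ρ₀ p, ρ₁ p} ⊓ closure {ρ₁ p, ρ₂ p} = closure {ρ₁ p} := by
  apply le_antisymm
  · intro x hx
    rw [Subgroup.mem_inf] at hx
    obtain ⟨hxa, hxb⟩ := hx
    rw [clo01, mem_sgD] at hxa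
    rw [clo12 p h1 h2 h3, mem_sg12] at hxb
    have hT : T p x.right = 1 := by rw [← hxb, hxa]
    rw [mem_clo_single p (ρ₁ p) (rho1_sq p)]
    rcases T_eq_one p h2 hT with hr | hr
    · left; exact SemidirectProduct.ext hxa hr
    · right; exact SemidirectProduct.ext hxa hr
  · exact le_inf (closure_mono (by intro x hx; right; exact hx))
      (closure_mono (by intro x hx; left; exact hx))

include h1 h2 h3 in
lemma I2 : closure {ρ₀ p, ρ₁ p} ⊓ closure {ρ₀ p, ρ₂ p} = closure {ρ₀ p} := by
  apply le_antisymm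
  · intro x hx
    rw [Subgroup.mem_inf] at hx
    obtain ⟨hxa, hxb⟩ := hx
    rw [clo01, mem_sgD] at hxa
    rw [mem_clo02 p h1 h2 h3] at hxb
    rw [mem_clo_single p (ρ₀ p) (rho0_sq p)]
    rcases hxb with rfl | rfl | rfl | rfl
    · left; rfl
    · right; rfl
    · exact absurd hxa (rho2_left_ne p h1)
    · exact absurd hxa (rho02_left_ne p h1 h2 h3)
  · exact le_inf (closure_mono (by intro x hx; left; exact hx))
      (closure_mono (by intro x hx; left; exact hx))

include h1 h2 h3 in
lemma map_clo01 : Subgroup.map (dd p h2).toMonoidHom (closure {ρ₀ p, ρ₁ p})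
    = closure {ρ₁ p, ρ₂ p} := by
  rw [MonoidHom.map_closure, Set.image_pair,
    show (dd p h2).toMonoidHom (ρ₀ p) = ρ₂ p from dd_rho0 p h1 h2 h3,
    show (dd p h2).toMonoidHom (ρ₁ p) = ρ₁ p from dd_rho1 p h2, Set.pair_comm]

include h1 h2 h3 in
lemma map_clo02 : Subgroup.map (dd p h2).toMonoidHom (closure {ρ₀ p, ρ₂ p})
    = closure {ρ₀ p, ρ₂ p} := by
  rw [MonoidHom.map_closure, Set.image_pair,
    show (dd p h2).toMonoidHom (ρ₀ p) = ρ₂ p from dd_rho0 p h1 h2 h3,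
    show (dd p h2).toMonoidHom (ρ₂ p) = ρ₀ p from dd_rho2 p h1 h2 h3, Set.pair_comm]

include h1 h2 h3 in
lemma I3 : closure {ρ₁ p, ρ₂ p} ⊓ closure {ρ₀ p, ρ₂ p} = closure {ρ₂ p} := by
  rw [← map_clo01 p h1 h2 h3, ← map_clo02 p h1 h2 h3,
    ← Subgroup.map_inf _ _ _ (dd p h2).injective, I2 p h1 h2 h3,
    MonoidHom.map_closure, Set.image_singleton,
    show (dd p h2).toMonoidHom (ρ₀ p) = ρ₂ p from dd_rho0 p h1 h2 h3]

include h1 h2 h3 in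
lemma I4 : closure {ρ₀ p} ⊓ closure {ρ₁ p, ρ₂ p} = ⊥ := by
  rw [eq_bot_iff]
  intro x hx
  rw [Subgroup.mem_inf] at hx
  obtain ⟨hxa, hxb⟩ := hx
  rw [mem_clo_single p (ρ₀ p) (rho0_sq p)] at hxa
  rw [clo12 p h1 h2 h3, mem_sg12] at hxb
  rw [Subgroup.mem_bot]
  rcases hxa with rfl | rfl
  · rfl
  · exfalso
    rw [show (ρ₀ p).right = sr 1 from rfl, T_sr1 p h1] at hxb
    exact kv_ne_one p h1 hxb.symm

include h1 h2 h3 in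
lemma I5 : closure {ρ₂ p} ⊓ closure {ρ₀ p, ρ₁ p} = ⊥ := by
  rw [eq_bot_iff]
  intro x hx
  rw [Subgroup.mem_inf] at hx
  obtain ⟨hxa, hxb⟩ := hx
  rw [mem_clo_single p (ρ₂ p) (rho2_sq p h1 h2 h3)] at hxa
  rw [clo01, mem_sgD] at hxb
  rw [Subgroup.mem_bot]
  rcases hxa with rfl | rfl
  · rfl
  · exact absurd hxb (rho2_left_ne p h1)

include h1 in
lemma rho0_ne_rho1 : ρ₀ p ≠ ρ₁ p := by
  intro h
  have := congrArg SemidirectProduct.right h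
  have h' : (1 : ZMod p) = 0 := by injection this
  exact h1 h'

include h1 in
lemma rho1_ne_rho2 : ρ₁ p ≠ ρ₂ p := by
  intro h
  have := congrArg SemidirectProduct.left h
  exact rho2_left_ne p h1 this.symm

include h1 in
lemma rho0_ne_rho2 : ρ₀ p ≠ ρ₂ p := by
  intro h
  have := congrArg SemidirectProduct.left h
  exact rho2_left_ne p h1 this.symm

include h1 h2 h3 in
lemma I6 : closure {ρ₀ p} ⊓ closure {ρ₂ p} = ⊥ := by
  rw [eq_bot_iff]
  intro x hx
  rw [Subgroup.mem_inf] at hx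
  obtain ⟨hxa, hxb⟩ := hx
  rw [mem_clo_single p (ρ₀ p) (rho0_sq p)] at hxa
  rw [mem_clo_single p (ρ₂ p) (rho2_sq p h1 h2 h3)] at hxb
  rw [Subgroup.mem_bot]
  rcases hxa with rfl | rfl
  · rfl
  · rcases hxb with h | h
    · exact h
    · exact absurd h (rho0_ne_rho2 p h1)

include h1 h2 h3 in
lemma I7 : closure {ρ₁ p} ⊓ closure {ρ₀ p, ρ₂ p} = ⊥ := by
  rw [eq_bot_iff]
  intro x hx
  rw [Subgroup.mem_inf] at hx
  obtain ⟨hxa, hxb⟩ := hx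
  rw [mem_clo_single p (ρ₁ p) (rho1_sq p)] at hxa
  rw [mem_clo02 p h1 h2 h3] at hxb
  rw [Subgroup.mem_bot]
  rcases hxa with rfl | rfl
  · rfl
  · exfalso
    rcases hxb with h | h | h | h
    · exact rho1_ne_one p h
    · exact rho0_ne_rho1 p h1 h.symm
    · exact rho1_ne_rho2 p h1 h
    · rw [rho02 p h1 h2 h3] at h
      have := congrArg SemidirectProduct.right h
      simp only [ρ₁, one_def] at this
      exact absurd this (fun h => by cases h)

include h1 in
lemma I8 : closure {ρ₀ p} ⊓ closure {ρ₁ p} = ⊥ := by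
  rw [eq_bot_iff]
  intro x hx
  rw [Subgroup.mem_inf] at hx
  obtain ⟨hxa, hxb⟩ := hx
  rw [mem_clo_single p (ρ₀ p) (rho0_sq p)] at hxa
  rw [mem_clo_single p (ρ₁ p) (rho1_sq p)] at hxb
  rw [Subgroup.mem_bot]
  rcases hxa with rfl | rfl
  · rfl
  · rcases hxb with h | h
    · exact h
    · exact absurd h (rho0_ne_rho1 p h1)

include h1 h2 h3 in
lemma I9 : closure {ρ₁ p} ⊓ closure {ρ₂ p} = ⊥ := by
  rw [eq_bot_iff]
  intro x hx
  rw [Subgroup.mem_inf] at hx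
  obtain ⟨hxa, hxb⟩ := hx
  rw [mem_clo_single p (ρ₁ p) (rho1_sq p)] at hxa
  rw [mem_clo_single p (ρ₂ p) (rho2_sq p h1 h2 h3)] at hxb
  rw [Subgroup.mem_bot]
  rcases hxa with rfl | rfl
  · rfl
  · rcases hxb with h | h
    · exact h
    · exact absurd h (rho1_ne_rho2 p h1)

end inters

section master
open Subgroup DihedralGroup
attribute [local instance] Classical.propDecidable
variable (h1 : (1:ZMod p) ≠ 0) (h2 : (2:ZMod p) ≠ 0) (h3 : (3:ZMod p) ≠ 0)

lemma rv0 : ρv p 0 = ρ₀ p := rfl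
lemma rv1 : ρv p 1 = ρ₁ p := rfl
lemma rv2 : ρv p 2 = ρ₂ p := rfl

lemma himg (S : Set (Fin 3)) : ρv p '' S =
    (if (0:Fin 3) ∈ S then {ρ₀ p} else ∅)
    ∪ ((if (1:Fin 3) ∈ S then {ρ₁ p} else ∅) ∪ (if (2:Fin 3) ∈ S then {ρ₂ p} else ∅)) := by
  ext x
  constructor
  · rintro ⟨i, hi, rfl⟩
    fin_cases i
    · left; rw [if_pos (show (0:Fin 3) ∈ S from hi)]; rfl
    · right; left; rw [if_pos (show (1:Fin 3) ∈ S from hi)]; rfl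
    · right; right; rw [if_pos (show (2:Fin 3) ∈ S from hi)]; rfl
  · intro hx
    rcases hx with h | h | h
    · by_cases h0 : (0:Fin 3) ∈ S
      · rw [if_pos h0] at h
        exact ⟨0, h0, by rw [Set.mem_singleton_iff] at h; exact (rv0 p).trans h.symm⟩
      · rw [if_neg h0] at h; exact absurd h (Set.notMem_empty x)
    · by_cases h0 : (1:Fin 3) ∈ S
      · rw [if_pos h0] at h
        exact ⟨1, h0, by rw [Set.mem_singleton_iff] at h; exact (rv1 p).trans h.symm⟩
      · rw [if_neg h0] at h; exact absurd h (Set.notMem_empty x)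
    · by_cases h0 : (2:Fin 3) ∈ S
      · rw [if_pos h0] at h
        exact ⟨2, h0, by rw [Set.mem_singleton_iff] at h; exact (rv2 p).trans h.symm⟩
      · rw [if_neg h0] at h; exact absurd h (Set.notMem_empty x)

include h1 h2 h3 in
set_option maxHeartbeats 3000000 in
theorem interprop (I J : Set (Fin 3)) :
    closure (ρv p '' I) ⊓ closure (ρv p '' J) = closure (ρv p '' (I ∩ J)) := by
  rw [himg p I, himg p J, himg p (I ∩ J)]
  by_cases hI0 : (0:Fin 3) ∈ I <;> by_cases hI1 : (1:Fin 3) ∈ I <;>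
    by_cases hI2 : (2:Fin 3) ∈ I <;> by_cases hJ0 : (0:Fin 3) ∈ J <;>
    by_cases hJ1 : (1:Fin 3) ∈ J <;> by_cases hJ2 : (2:Fin 3) ∈ J <;>
    simp only [hI0, hI1, hI2, hJ0, hJ1, hJ2, Set.mem_inter_iff, and_true, and_false,
      true_and, false_and, if_true, if_false, and_self, Set.union_empty, Set.empty_union,
      Set.singleton_union] <;>
    first
    | exact inf_idem _
    | exact inf_eq_left.mpr (closure_mono (by
        intro t ht
        simp only [Set.mem_insert_iff, Set.mem_singleton_iff, Set.mem_empty_iff_false] at ht ⊢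
        tauto))
    | exact inf_eq_right.mpr (closure_mono (by
        intro t ht
        simp only [Set.mem_insert_iff, Set.mem_singleton_iff, Set.mem_empty_iff_false] at ht ⊢
        tauto))
    | exact I1 p h1 h2 h3
    | (rw [inf_comm]; exact I1 p h1 h2 h3)
    | exact I2 p h1 h2 h3
    | (rw [inf_comm]; exact I2 p h1 h2 h3)
    | exact I3 p h1 h2 h3
    | (rw [inf_comm]; exact I3 p h1 h2 h3)
    | (rw [Subgroup.closure_empty]
       first
       | exact I4 p h1 h2 h3
       | (rw [inf_comm]; exact I4 p h1 h2 h3)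
       | exact I5 p h1 h2 h3
       | (rw [inf_comm]; exact I5 p h1 h2 h3)
       | exact I6 p h1 h2 h3
       | (rw [inf_comm]; exact I6 p h1 h2 h3)
       | exact I7 p h1 h2 h3
       | (rw [inf_comm]; exact I7 p h1 h2 h3)
       | exact I8 p h1
       | (rw [inf_comm]; exact I8 p h1)
       | exact I9 p h1 h2 h3
       | (rw [inf_comm]; exact I9 p h1 h2 h3)
       | (rw [bot_inf_eq])
       | (rw [inf_bot_eq]))

end master

section final
open Subgroup DihedralGroup

instance : Finite (Γ p) := by
  have hfin : Finite (K p × DihedralGroup p) := inferInstance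
  exact Finite.of_injective (fun g : Γ p => (g.left, g.right))
    (fun a b h => SemidirectProduct.ext (congrArg Prod.fst h) (congrArg Prod.snd h))

def SG : Subgroup (Γ p) := closure {ρ₀ p, ρ₁ p, ρ₂ p}

lemma mem_SG (i : Fin 3) : ρv p i ∈ SG p := by
  fin_cases i
  · exact subset_closure (by left; rfl)
  · exact subset_closure (by right; left; rfl)
  · exact subset_closure (by right; right; rfl)

def ρG : Fin 3 → ↥(SG p) := fun i => ⟨ρv p i, mem_SG p i⟩

lemma range_ρv : Set.range (ρv p) = {ρ₀ p, ρ₁ p, ρ₂ p} := by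
  ext x
  constructor
  · rintro ⟨i, rfl⟩
    fin_cases i
    · left; rfl
    · right; left; rfl
    · right; right; rfl
  · rintro (rfl | rfl | rfl)
    · exact ⟨0, rfl⟩
    · exact ⟨1, rfl⟩
    · exact ⟨2, rfl⟩

lemma gen_top : closure (Set.range (ρG p)) = (⊤ : Subgroup ↥(SG p)) := by
  apply Subgroup.map_injective (SG p).subtype_injective
  rw [MonoidHom.map_closure, ← Set.range_comp]
  have hc : ((SG p).subtype ∘ ρG p) = ρv p := rfl
  rw [hc, range_ρv, ← MonoidHom.range_eq_map, Subgroup.range_subtype]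
  rfl

variable (h1 : (1:ZMod p) ≠ 0) (h2 : (2:ZMod p) ≠ 0) (h3 : (3:ZMod p) ≠ 0)

include h1 h2 h3 in
lemma hmapSG : Subgroup.map (dd p h2).toMonoidHom (SG p) = SG p := by
  rw [SG, MonoidHom.map_closure]
  congr 1
  rw [show ({ρ₀ p, ρ₁ p, ρ₂ p} : Set (Γ p)) = insert (ρ₀ p) (insert (ρ₁ p) {ρ₂ p}) from rfl,
    Set.image_insert_eq, Set.image_insert_eq, Set.image_singleton,
    show (dd p h2).toMonoidHom (ρ₀ p) = ρ₂ p from dd_rho0 p h1 h2 h3,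
    show (dd p h2).toMonoidHom (ρ₁ p) = ρ₁ p from dd_rho1 p h2,
    show (dd p h2).toMonoidHom (ρ₂ p) = ρ₀ p from dd_rho2 p h1 h2 h3]
  ext x
  simp only [Set.mem_insert_iff, Set.mem_singleton_iff]
  tauto

def dG (h1 : (1:ZMod p) ≠ 0) (h2 : (2:ZMod p) ≠ 0) (h3 : (3:ZMod p) ≠ 0) :
    ↥(SG p) ≃* ↥(SG p) :=
  ((dd p h2).subgroupMap (SG p)).trans (MulEquiv.subgroupCongr (hmapSG p h1 h2 h3))

lemma dG_apply (x : ↥(SG p)) : ((dG p h1 h2 h3 x : ↥(SG p)) : Γ p) = dd p h2 (x : Γ p) := rfl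

end final

end ESD

open ESD in
/-- For every integer `p ≥ 4` there is a finite string C-group of rank 3 of type
`{p, p}` that is externally self-dual: it admits a group automorphism sending each
`ρ i` to `ρ (2 - i)`, but admits no dualizing element. -/
theorem exists_externally_self_dual_of_type_pp (p : ℕ) (hp : 4 ≤ p) :
    ∃ (G : Type) (_ : Group G) (_ : Finite G) (ρ : Fin 3 → G),
      IsStringCGroup ρ ∧ orderOf (ρ 0 * ρ 1) = p ∧ orderOf (ρ 1 * ρ 2) = p ∧
        (∃ d : G ≃* G, ∀ i : Fin 3, d (ρ i) = ρ i.rev) ∧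
        ¬∃ α : G, IsDualizing ρ α := by
  haveI : NeZero p := ⟨by omega⟩
  have hcast : ∀ c : ℕ, 0 < c → c < p → ((c : ℕ) : ZMod p) ≠ 0 := by
    intro c hc1 hc2 h
    rw [ZMod.natCast_eq_zero_iff] at h
    exact absurd (Nat.le_of_dvd hc1 h) (by omega)
  have h1 : (1 : ZMod p) ≠ 0 := by
    have := hcast 1 (by omega) (by omega); simpa using this
  have h2 : (2 : ZMod p) ≠ 0 := by
    have := hcast 2 (by omega) (by omega)
    simpa using this
  have h3 : (3 : ZMod p) ≠ 0 := by
    have := hcast 3 (by omega) (by omega)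
    simpa using this
  have key : ∀ x : ↥(SG p), orderOf x = orderOf (x : Γ p) :=
    fun x => (orderOf_injective (SG p).subtype (SG p).subtype_injective x).symm
  have hcomp : ((SG p).subtype ∘ ρG p) = ρv p := rfl
  refine ⟨↥(SG p), inferInstance, inferInstance, ρG p,
    ⟨gen_top p, ?_, ?_, ?_⟩, ?_, ?_, ⟨dG p h1 h2 h3, ?_⟩, ?_⟩
  · -- orders of generators
    intro i
    fin_cases i
    · rw [key]; exact ord_rho0 p
    · rw [key]; exact ord_rho1 p
    · rw [key]; exact ord_rho2 p h1 h2 h3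
  · -- commuting far generators
    intro i j hij
    have hcomm : ρ₂ p * ρ₀ p = ρ₀ p * ρ₂ p :=
      (rho20 p h1 h2 h3).trans (rho02 p h1 h2 h3).symm
    fin_cases i <;> fin_cases j <;> simp only [Fin.isValue] at hij ⊢ <;>
      first
      | (exfalso; omega)
      | (apply Subtype.ext
         show (ρ₀ p * ρ₂ p) ^ 2 = 1
         rw [pow_two]
         exact rho02_sq p h1 h2 h3)
      | (apply Subtype.ext
         show (ρ₂ p * ρ₀ p) ^ 2 = 1
         rw [pow_two, hcomm]
         exact rho02_sq p h1 h2 h3)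
  · -- intersection property
    intro I J
    apply Subgroup.map_injective (SG p).subtype_injective
    rw [Subgroup.map_inf _ _ _ (SG p).subtype_injective, MonoidHom.map_closure,
      MonoidHom.map_closure, MonoidHom.map_closure, ← Set.image_comp, ← Set.image_comp,
      ← Set.image_comp, hcomp]
    exact interprop p h1 h2 h3 I J
  · -- type : first entry
    rw [key]
    exact ord_x p
  · rw [key]
    exact ord_y p h1 h2 h3
  · -- duality images
    intro i
    fin_cases i
    · apply Subtype.ext
      rw [dG_apply]
      exact dd_rho0 p h1 h2 h3
    · apply Subtype.ext
      rw [dG_apply]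
      exact dd_rho1 p h2
    · apply Subtype.ext
      rw [dG_apply]
      exact dd_rho2 p h1 h2 h3
  · -- no dualizing element
    rintro ⟨α, hα⟩
    refine no_dualizing p h1 h2 h3 (α : Γ p) ⟨?_, ?_, ?_⟩
    · exact congrArg Subtype.val (hα 0)
    · exact congrArg Subtype.val (hα 1)
    · exact congrArg Subtype.val (hα 2)
end

section
/- Let p ≥ 3 be an integer and let G be a group generated by two elements ρ₀, ρ₁, each of order 2, such that ρ₀ρ₁ has order p. Then there exists α ∈ G with αρ₀α⁻¹ = ρ₁ and αρ₁α⁻¹ = ρ₀ if and only if p is odd. (The p-gon {p} is internally self-dual if and only if p is odd.) -/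
/-- In a dihedral-type group generated by two involutions `ρ₀, ρ₁` whose product has
order `p ≥ 3`, there is an element conjugating `ρ₀` to `ρ₁` and `ρ₁` to `ρ₀` if and
only if `p` is odd.  (The `p`-gon is internally self-dual iff `p` is odd.) -/
theorem pgon_internally_self_dual_iff_odd (p : ℕ) (hp : 3 ≤ p)
    {G : Type*} [Group G] (ρ₀ ρ₁ : G)
    (hgen : Subgroup.closure {ρ₀, ρ₁} = ⊤)
    (h₀ : orderOf ρ₀ = 2) (h₁ : orderOf ρ₁ = 2)
    (hprod : orderOf (ρ₀ * ρ₁) = p) :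
    (∃ α : G, α * ρ₀ * α⁻¹ = ρ₁ ∧ α * ρ₁ * α⁻¹ = ρ₀) ↔ Odd p := by
  set r := ρ₀ * ρ₁ with hr
  have hρ₀ : ρ₀ * ρ₀ = 1 := by
    have := pow_orderOf_eq_one ρ₀; rwa [h₀, pow_two] at this
  have hρ₁ : ρ₁ * ρ₁ = 1 := by
    have := pow_orderOf_eq_one ρ₁; rwa [h₁, pow_two] at this
  have hinv₀ : ρ₀⁻¹ = ρ₀ := inv_eq_of_mul_eq_one_right hρ₀
  have hinv₁ : ρ₁⁻¹ = ρ₁ := inv_eq_of_mul_eq_one_right hρ₁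
  have hrinv : r⁻¹ = ρ₁ * ρ₀ := by rw [hr, mul_inv_rev, hinv₀, hinv₁]
  have hconj : ρ₀ * r * ρ₀⁻¹ = r⁻¹ := by
    rw [hinv₀, hrinv, hr]
    calc ρ₀ * (ρ₀ * ρ₁) * ρ₀ = (ρ₀ * ρ₀) * (ρ₁ * ρ₀) := by group
    _ = ρ₁ * ρ₀ := by rw [hρ₀, one_mul]
  -- key commutation rule
  have hswap : ∀ k : ℤ, ρ₀ * r ^ k = r ^ (-k) * ρ₀ := by
    intro k
    have h1 := (map_zpow (MulAut.conj ρ₀) r k).symm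
    simp only [MulAut.conj_apply] at h1
    rw [hconj, inv_zpow, ← zpow_neg] at h1
    rw [h1, mul_assoc, hinv₀, hρ₀, mul_one]
  have hswap' : ∀ (k : ℤ) (x : G), ρ₀ * (r ^ k * x) = r ^ (-k) * (ρ₀ * x) := by
    intro k x; rw [← mul_assoc, hswap, mul_assoc]
  have hρ₀' : ∀ x : G, ρ₀ * (ρ₀ * x) = x := by
    intro x; rw [← mul_assoc, hρ₀, one_mul]
  have hmerge : ∀ (a b : ℤ) (x : G), r ^ a * (r ^ b * x) = r ^ (a + b) * x := by
    intro a b x; rw [← mul_assoc, ← zpow_add]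
  have hρ₁r : ρ₁ = r ^ (-1 : ℤ) * ρ₀ := by
    rw [zpow_neg, zpow_one, hrinv, mul_assoc, hρ₀, mul_one]
  have hordz : ∀ n : ℤ, r ^ n = 1 ↔ (p : ℤ) ∣ n := by
    intro n
    rw [← hprod, ← orderOf_dvd_iff_zpow_eq_one]
  have hcancel : ∀ a b : ℤ, (p : ℤ) ∣ a - b → r ^ a = r ^ b := by
    intro a b h
    have h1 : r ^ (a - b) = 1 := (hordz _).mpr h
    have : a = a - b + b := by ring
    rw [this, zpow_add, h1, one_mul]
  -- every element is r^k or r^k * ρ₀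
  have hform : ∀ g : G, (∃ k : ℤ, g = r ^ k) ∨ (∃ k : ℤ, g = r ^ k * ρ₀) := by
    intro g
    have hg : g ∈ Subgroup.closure {ρ₀, ρ₁} := by rw [hgen]; trivial
    induction hg using Subgroup.closure_induction with
    | mem x hx =>
      rcases hx with h | h
      · exact Or.inr ⟨0, by rw [h, zpow_zero, one_mul]⟩
      · exact Or.inr ⟨-1, by rw [h, hρ₁r]⟩
    | one => exact Or.inl ⟨0, (zpow_zero r).symm⟩
    | mul x y _ _ hx hy =>
      rcases hx with ⟨a, rfl⟩ | ⟨a, rfl⟩ <;> rcases hy with ⟨b, rfl⟩ | ⟨b, rfl⟩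
      · exact Or.inl ⟨a + b, by rw [zpow_add]⟩
      · exact Or.inr ⟨a + b, by rw [zpow_add, mul_assoc]⟩
      · exact Or.inr ⟨a + -b, by
          simp only [mul_assoc, hswap, hswap', hmerge, ← zpow_add]⟩
      · exact Or.inl ⟨a + -b, by
          simp only [mul_assoc, hswap, hswap', hρ₀', hρ₀, hmerge, mul_one, ← zpow_add]⟩
    | inv x _ hx =>
      rcases hx with ⟨a, rfl⟩ | ⟨a, rfl⟩
      · exact Or.inl ⟨-a, by rw [zpow_neg]⟩
      · exact Or.inr ⟨a, by
          rw [mul_inv_rev, hinv₀, ← zpow_neg, hswap, neg_neg]⟩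
  constructor
  · rintro ⟨α, hα, -⟩
    have key : ∃ k : ℤ, r ^ (k + k) * ρ₀ = ρ₁ := by
      rcases hform α with ⟨k, rfl⟩ | ⟨k, rfl⟩
      · refine ⟨k, ?_⟩
        rw [← hα, ← zpow_neg]
        simp only [mul_assoc, hswap, hswap', hρ₀', hρ₀, hmerge, mul_one, neg_neg]
      · refine ⟨k, ?_⟩
        rw [← hα, mul_inv_rev, hinv₀, ← zpow_neg]
        simp only [mul_assoc, hswap, hswap', hρ₀', hρ₀, hmerge, mul_one, neg_neg]
    obtain ⟨k, hk⟩ := key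
    rw [hρ₁r] at hk
    have hcan : r ^ (k + k) = r ^ (-1 : ℤ) := mul_right_cancel hk
    have h1 : r ^ (k + k + 1) = 1 := by
      rw [zpow_add, hcan, ← zpow_add]; simp
    have hdvd : (p : ℤ) ∣ k + k + 1 := (hordz _).mp h1
    rcases Nat.even_or_odd p with he | ho
    · exfalso
      have heven : Even ((p : ℤ)) := by exact_mod_cast he
      obtain ⟨c, hc⟩ := hdvd
      obtain ⟨t, ht⟩ := heven.mul_right c
      omega
    · exact ho
  · rintro ⟨m, rfl⟩
    refine ⟨r ^ (m : ℤ) * ρ₀, ?_, ?_⟩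
    · rw [hρ₁r, mul_inv_rev, hinv₀, ← zpow_neg]
      simp only [mul_assoc, hswap, hswap', hρ₀', hρ₀, hmerge, mul_one, neg_neg]
      have : r ^ ((m : ℤ) + m) = r ^ (-1 : ℤ) := by
        apply hcancel
        exact ⟨1, by push_cast; ring⟩
      rw [this]
    · rw [hρ₁r, mul_inv_rev, hinv₀, ← zpow_neg]
      simp only [mul_assoc, hswap, hswap', hρ₀', hρ₀, hmerge, mul_one, neg_neg]
      have : r ^ ((m : ℤ) + (1 + m)) = r ^ (0 : ℤ) := by
        apply hcancel
        exact ⟨1, by push_cast; ring⟩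
      rw [this, zpow_zero, one_mul]
end

section
/- Let s ≥ 2 be an integer. In the group of permutations of (ZMod s) × (ZMod s), define ρ₀ : (x, y) ↦ (1 − x, y), ρ₁ : (x, y) ↦ (y, x), and ρ₂ : (x, y) ↦ (x, −y), and let G be the subgroup generated by ρ₀, ρ₁, ρ₂. Then there exists α ∈ G with αρ₀α⁻¹ = ρ₂, αρ₁α⁻¹ = ρ₁, and αρ₂α⁻¹ = ρ₀ if and only if s is odd. (The toroidal polyhedron {4,4}_{(s,0)} is internally self-dual if and only if s is odd.) -/
/-- The generator `ρ₀ : (x, y) ↦ (1 - x, y)` of the toroidal map `{4,4}_{(s,0)}`. -/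
def torusRho0 (s : ℕ) : Equiv.Perm (ZMod s × ZMod s) :=
  Function.Involutive.toPerm (fun q => (1 - q.1, q.2)) (by
    intro q
    simp [sub_sub_cancel])

/-- The generator `ρ₁ : (x, y) ↦ (y, x)` of the toroidal map `{4,4}_{(s,0)}`. -/
def torusRho1 (s : ℕ) : Equiv.Perm (ZMod s × ZMod s) :=
  Equiv.prodComm (ZMod s) (ZMod s)

/-- The generator `ρ₂ : (x, y) ↦ (x, -y)` of the toroidal map `{4,4}_{(s,0)}`. -/
def torusRho2 (s : ℕ) : Equiv.Perm (ZMod s × ZMod s) :=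
  Function.Involutive.toPerm (fun q => (q.1, -q.2)) (by
    intro q
    simp)

/-- The toroidal polyhedron `{4,4}_{(s,0)}` is internally self-dual iff `s` is odd:
the group generated by `ρ₀, ρ₁, ρ₂` contains an element conjugating `ρ₀` to `ρ₂`,
`ρ₁` to `ρ₁` and `ρ₂` to `ρ₀` if and only if `s` is odd. -/
theorem torus44_internally_self_dual_iff_odd (s : ℕ) (hs : 2 ≤ s) :
    (∃ α ∈ Subgroup.closure {torusRho0 s, torusRho1 s, torusRho2 s},
      α * torusRho0 s * α⁻¹ = torusRho2 s ∧
      α * torusRho1 s * α⁻¹ = torusRho1 s ∧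
      α * torusRho2 s * α⁻¹ = torusRho0 s) ↔ Odd s := by
  constructor
  · rintro ⟨α, -, h0, -, -⟩
    rw [← Nat.not_even_iff_odd]
    intro heven
    have h2 : (2 : ℕ) ∣ s := heven.two_dvd
    have h0' : torusRho0 s = α⁻¹ * torusRho2 s * α := by
      rw [← h0]; group
    have hfix : torusRho0 s (α⁻¹ (0, 0)) = α⁻¹ (0, 0) := by
      rw [h0']
      simp [Equiv.Perm.mul_apply, torusRho2, Function.Involutive.coe_toPerm, Function.Involutive.toPerm, Equiv.coe_fn_mk]
    have h1 : 1 - (α⁻¹ (0, 0)).1 = (α⁻¹ (0, 0)).1 := by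
      have := congrArg Prod.fst hfix
      simpa [torusRho0, Function.Involutive.coe_toPerm, Function.Involutive.toPerm, Equiv.coe_fn_mk] using this
    have h3 : (2 : ZMod s) * (α⁻¹ (0, 0)).1 = 1 := by linear_combination -h1
    have h4 := congrArg (ZMod.castHom h2 (ZMod 2)) h3
    rw [map_mul, map_one, map_ofNat] at h4
    have h5 : (2 : ZMod 2) = 0 := by decide
    rw [h5, zero_mul] at h4
    exact zero_ne_one h4
  · rintro ⟨k, hk⟩
    have hs0 : ((s : ℕ) : ZMod s) = 0 := ZMod.natCast_self s
    have hsz : (2 * (k : ZMod s) + 1 : ZMod s) = 0 := by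
      have : ((2 * k + 1 : ℕ) : ZMod s) = 0 := by rw [← hk]; exact hs0
      push_cast at this
      linear_combination this
    set T1 : Equiv.Perm (ZMod s × ZMod s) :=
      torusRho0 s * (torusRho1 s * torusRho2 s * torusRho1 s) with hT1def
    set T2 : Equiv.Perm (ZMod s × ZMod s) := torusRho1 s * T1 * torusRho1 s with hT2def
    have hT1 : ∀ q : ZMod s × ZMod s, T1 q = (1 + q.1, q.2) := by
      intro q
      simp [hT1def, torusRho0, torusRho1, torusRho2, Equiv.Perm.mul_apply,
        Function.Involutive.coe_toPerm, Function.Involutive.toPerm, Equiv.coe_fn_mk, sub_neg_eq_add, Equiv.prodComm_apply]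
    have hT2 : ∀ q : ZMod s × ZMod s, T2 q = (q.1, 1 + q.2) := by
      intro q
      simp [hT2def, torusRho1, Equiv.Perm.mul_apply, hT1]
    have hT1n : ∀ (n : ℕ) (q : ZMod s × ZMod s), (T1 ^ n) q = (q.1 + n, q.2) := by
      intro n
      induction n with
      | zero => intro q; simp
      | succ n ih =>
        intro q
        rw [pow_succ']
        simp only [Equiv.Perm.mul_apply, hT1, ih, Prod.mk.injEq]
        push_cast
        exact ⟨by ring, trivial⟩
    have hT2n : ∀ (n : ℕ) (q : ZMod s × ZMod s), (T2 ^ n) q = (q.1, q.2 + n) := by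
      intro n
      induction n with
      | zero => intro q; simp
      | succ n ih =>
        intro q
        rw [pow_succ']
        simp only [Equiv.Perm.mul_apply, hT2, ih, Prod.mk.injEq]
        push_cast
        exact ⟨trivial, by ring⟩
    set c : Equiv.Perm (ZMod s × ZMod s) :=
      torusRho2 s * torusRho1 s * torusRho2 s with hcdef
    have hc : ∀ q : ZMod s × ZMod s, c q = (-q.2, -q.1) := by
      intro q
      simp [hcdef, torusRho1, torusRho2, Equiv.Perm.mul_apply,
        Function.Involutive.coe_toPerm, Function.Involutive.toPerm, Equiv.coe_fn_mk]
    set α : Equiv.Perm (ZMod s × ZMod s) := T1 ^ (k + 1) * T2 ^ (k + 1) * c with hαdef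
    have hα : ∀ q : ZMod s × ZMod s, α q = ((k : ZMod s) + 1 - q.2, (k : ZMod s) + 1 - q.1) := by
      intro q
      simp only [hαdef, Equiv.Perm.mul_apply, hc, hT1n, hT2n, Prod.mk.injEq]
      push_cast
      exact ⟨by ring, by ring⟩
    have hinv : α⁻¹ = α := by
      apply inv_eq_of_mul_eq_one_right
      ext q <;> simp [Equiv.Perm.mul_apply, hα, sub_sub_cancel]
    have hmem : α ∈ Subgroup.closure {torusRho0 s, torusRho1 s, torusRho2 s} := by
      have m0 : torusRho0 s ∈ Subgroup.closure {torusRho0 s, torusRho1 s, torusRho2 s} :=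
        Subgroup.subset_closure (by simp)
      have m1 : torusRho1 s ∈ Subgroup.closure {torusRho0 s, torusRho1 s, torusRho2 s} :=
        Subgroup.subset_closure (by simp)
      have m2 : torusRho2 s ∈ Subgroup.closure {torusRho0 s, torusRho1 s, torusRho2 s} :=
        Subgroup.subset_closure (by simp)
      exact mul_mem (mul_mem (pow_mem (mul_mem m0 (mul_mem (mul_mem m1 m2) m1)) _)
        (pow_mem (mul_mem (mul_mem m1 (mul_mem m0 (mul_mem (mul_mem m1 m2) m1))) m1) _))
        (mul_mem (mul_mem m2 m1) m2)
    refine ⟨α, hmem, ?_, ?_, ?_⟩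
    · rw [hinv]
      ext q <;>
        simp only [Equiv.Perm.mul_apply, hα, torusRho0, torusRho2,
          Function.Involutive.coe_toPerm, Function.Involutive.toPerm, Equiv.coe_fn_mk] <;>
        first
        | ring1
        | linear_combination hsz
    · rw [hinv]
      ext q <;>
        simp only [Equiv.Perm.mul_apply, hα, torusRho1, Equiv.prodComm_apply, Prod.swap] <;>
        ring
    · rw [hinv]
      ext q <;>
        simp only [Equiv.Perm.mul_apply, hα, torusRho0, torusRho2,
          Function.Involutive.coe_toPerm, Function.Involutive.toPerm, Equiv.coe_fn_mk] <;>
        first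
        | ring1
        | linear_combination hsz
end

section
/- Let n ≥ 2 and s ≥ 2 be integers. In the group of permutations of (ZMod s)ⁿ, define ρ₀ : (x₁, …, xₙ) ↦ (1 − x₁, x₂, …, xₙ), ρᵢ (for 1 ≤ i ≤ n − 1) to be the permutation interchanging coordinates xᵢ and x_{i+1}, and ρₙ : (x₁, …, xₙ) ↦ (x₁, …, x_{n−1}, −xₙ), and let G be the subgroup generated by ρ₀, …, ρₙ. Then there exists α ∈ G with αρᵢα⁻¹ = ρ_{n−i} for all 0 ≤ i ≤ n if and only if s is odd. (The cubic toroid {4, 3^{n−2}, 4}_{(s,0^{n−1})}, an (n+1)-polytope, is internally self-dual if and only if s is odd.) -/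
/-- The permutation of `Fin n → ZMod s` replacing the coordinate at `k` by `1 -` it. -/
def affineFlip (n s : ℕ) (k : Fin n) : Equiv.Perm (Fin n → ZMod s) :=
  Function.Involutive.toPerm (fun x => Function.update x k (1 - x k)) (by
    intro x
    simp [Function.update_idem, sub_sub_cancel])

/-- The permutation of `Fin n → ZMod s` negating the coordinate at `k`. -/
def negFlip (n s : ℕ) (k : Fin n) : Equiv.Perm (Fin n → ZMod s) :=
  Function.Involutive.toPerm (fun x => Function.update x k (-(x k))) (by
    intro x
    simp [Function.update_idem])

/-- The permutation of `Fin n → ZMod s` interchanging the coordinates at `a` and `b`. -/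
def swapCoords (n s : ℕ) (a b : Fin n) : Equiv.Perm (Fin n → ZMod s) :=
  (Equiv.swap a b).arrowCongr (Equiv.refl (ZMod s))

/-- The distinguished generators `ρ₀, …, ρₙ` of the cubic toroid
`{4, 3^{n-2}, 4}_{(s,0^{n-1})}` acting on its vertex set `(ZMod s)ⁿ`:
`ρ₀` sends `x₁` to `1 - x₁`, `ρᵢ` (for `1 ≤ i ≤ n - 1`) interchanges `xᵢ` and
`x_{i+1}`, and `ρₙ` negates `xₙ`. -/
def cubicToroidGen (n s : ℕ) (hn : 0 < n) (i : Fin (n + 1)) :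
    Equiv.Perm (Fin n → ZMod s) :=
  if h0 : (i : ℕ) = 0 then affineFlip n s ⟨0, hn⟩
  else if htop : (i : ℕ) = n then negFlip n s ⟨n - 1, by omega⟩
  else
    swapCoords n s ⟨(i : ℕ) - 1, by omega⟩ ⟨(i : ℕ), by have := i.isLt; omega⟩

def permPi (n s : ℕ) : Equiv.Perm (Fin n) →* Equiv.Perm (Fin n → ZMod s) where
  toFun p := p.arrowCongr (Equiv.refl (ZMod s))
  map_one' := by ext x; rfl
  map_mul' p q := by ext x j; rfl

theorem permPi_apply (n s : ℕ) (p : Equiv.Perm (Fin n)) (x : Fin n → ZMod s) (j : Fin n) :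
    permPi n s p x j = x (p.symm j) := rfl

theorem swapCoords_eq_permPi (n s : ℕ) (a b : Fin n) :
    swapCoords n s a b = permPi n s (Equiv.swap a b) := rfl

theorem swapCoords_apply (n s : ℕ) (a b : Fin n) (x : Fin n → ZMod s) (j : Fin n) :
    swapCoords n s a b x j = x (Equiv.swap a b j) := rfl

theorem affineFlip_apply (n s : ℕ) (k : Fin n) (x : Fin n → ZMod s) :
    affineFlip n s k x = Function.update x k (1 - x k) := rfl

theorem negFlip_apply (n s : ℕ) (k : Fin n) (x : Fin n → ZMod s) :
    negFlip n s k x = Function.update x k (-(x k)) := rfl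

theorem gen_of_eq_zero (n s : ℕ) (hn : 0 < n) {i : Fin (n+1)} (h : (i : ℕ) = 0) :
    cubicToroidGen n s hn i = affineFlip n s ⟨0, hn⟩ := by
  unfold cubicToroidGen; rw [dif_pos h]

theorem gen_of_eq_top (n s : ℕ) (hn : 0 < n) {i : Fin (n+1)} (h : (i : ℕ) = n) :
    cubicToroidGen n s hn i = negFlip n s ⟨n - 1, by omega⟩ := by
  unfold cubicToroidGen; rw [dif_neg (by omega), dif_pos h]

theorem gen_of_mid (n s : ℕ) (hn : 0 < n) {i : Fin (n+1)} (h0 : (i : ℕ) ≠ 0) (h1 : (i : ℕ) ≠ n) :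
    cubicToroidGen n s hn i
      = swapCoords n s ⟨(i : ℕ) - 1, by omega⟩ ⟨(i : ℕ), by have := i.isLt; omega⟩ := by
  unfold cubicToroidGen; rw [dif_neg h0, dif_neg h1]

theorem permPi_mem (n s : ℕ) (hn : 0 < n) (p : Equiv.Perm (Fin n)) :
    permPi n s p ∈ Subgroup.closure (Set.range (cubicToroidGen n s hn)) := by
  match n, hn, p with
  | (m+1), hn, p =>
    have hp : p ∈ Submonoid.closure
        (Set.range fun i : Fin m ↦ Equiv.swap i.castSucc i.succ) := by
      rw [Equiv.Perm.mclosure_swap_castSucc_succ]; trivial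
    induction hp using Submonoid.closure_induction with
    | mem q hq =>
        obtain ⟨i, rfl⟩ := hq
        apply Subgroup.subset_closure
        refine ⟨⟨(i : ℕ) + 1, by omega⟩, ?_⟩
        have hne2 : ((⟨(i : ℕ) + 1, by omega⟩ : Fin (m + 2)) : ℕ) ≠ m + 1 := by
          show (i : ℕ) + 1 ≠ m + 1
          have := i.isLt; omega
        rw [gen_of_mid (m+1) s hn (Nat.succ_ne_zero _) hne2]
        rw [swapCoords_eq_permPi]
        have e1 : (⟨(↑(⟨(i : ℕ) + 1, by omega⟩ : Fin (m+2)) : ℕ) - 1, by omega⟩ : Fin (m+1)) = i.castSucc := rfl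
        have e2 : (⟨(↑(⟨(i : ℕ) + 1, by omega⟩ : Fin (m+2)) : ℕ), by omega⟩ : Fin (m+1)) = i.succ := rfl
        rw [e1, e2]
    | one => rw [map_one]; exact one_mem _
    | mul a b ha hb iha ihb => rw [map_mul]; exact mul_mem iha ihb

theorem swapCoords_mem (n s : ℕ) (hn : 0 < n) (a b : Fin n) :
    swapCoords n s a b ∈ Subgroup.closure (Set.range (cubicToroidGen n s hn)) := by
  rw [swapCoords_eq_permPi]; exact permPi_mem n s hn _

theorem conj_update (n s : ℕ) (e : Equiv.Perm (Fin n)) (c : Fin n) (g : ZMod s → ZMod s)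
    (F G : Equiv.Perm (Fin n → ZMod s))
    (hF : ∀ x, F x = Function.update x c (g (x c)))
    (hG : ∀ x, G x = Function.update x (e c) (g (x (e c)))) :
    permPi n s e * F * (permPi n s e)⁻¹ = G := by
  apply Equiv.ext; intro x
  rw [← map_inv]
  show permPi n s e (F (permPi n s e⁻¹ x)) = G x
  rw [hG, hF]
  funext j
  have hx : ∀ j, permPi n s e⁻¹ x j = x (e j) := fun j => rfl
  rw [permPi_apply]
  simp only [Function.update_apply, hx]
  rcases eq_or_ne j (e c) with h | h
  · subst h; simp
  · rw [if_neg (fun hc => h (by rw [← hc, e.apply_symm_apply])), if_neg h,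
      e.apply_symm_apply]

theorem affineFlip_mem (n s : ℕ) (hn : 0 < n) (k : Fin n) :
    affineFlip n s k ∈ Subgroup.closure (Set.range (cubicToroidGen n s hn)) := by
  have h := conj_update n s (Equiv.swap ⟨0, hn⟩ k) ⟨0, hn⟩ (fun t => 1 - t)
      (affineFlip n s ⟨0, hn⟩) (affineFlip n s k) (fun x => rfl)
      (fun x => by rw [Equiv.swap_apply_left]; rfl)
  rw [← h]
  have h0 : affineFlip n s ⟨0, hn⟩ ∈ Subgroup.closure (Set.range (cubicToroidGen n s hn)) := by
    rw [← gen_of_eq_zero n s hn (i := 0) rfl]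
    exact Subgroup.subset_closure ⟨0, rfl⟩
  rw [← swapCoords_eq_permPi]
  exact mul_mem (mul_mem (swapCoords_mem n s hn _ _) h0) (inv_mem (swapCoords_mem n s hn _ _))

theorem negFlip_mem (n s : ℕ) (hn : 0 < n) (k : Fin n) :
    negFlip n s k ∈ Subgroup.closure (Set.range (cubicToroidGen n s hn)) := by
  have h := conj_update n s (Equiv.swap ⟨n - 1, by omega⟩ k) ⟨n - 1, by omega⟩ (fun t => -t)
      (negFlip n s ⟨n - 1, by omega⟩) (negFlip n s k) (fun x => rfl)
      (fun x => by rw [Equiv.swap_apply_left]; rfl)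
  rw [← h]
  have h0 : negFlip n s ⟨n - 1, by omega⟩
      ∈ Subgroup.closure (Set.range (cubicToroidGen n s hn)) := by
    rw [← gen_of_eq_top n s hn (i := Fin.last n) rfl]
    exact Subgroup.subset_closure ⟨Fin.last n, rfl⟩
  rw [← swapCoords_eq_permPi]
  exact mul_mem (mul_mem (swapCoords_mem n s hn _ _) h0) (inv_mem (swapCoords_mem n s hn _ _))

def cFlip (n s : ℕ) (c : ZMod s) (k : Fin n) : Equiv.Perm (Fin n → ZMod s) :=
  Function.Involutive.toPerm (fun x => Function.update x k (c - x k)) (by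
    intro x
    simp [Function.update_idem, sub_sub_cancel])

theorem cFlip_apply (n s : ℕ) (c : ZMod s) (k : Fin n) (x : Fin n → ZMod s) :
    cFlip n s c k x = Function.update x k (c - x k) := rfl

theorem tau_pow_apply (n s : ℕ) (k : Fin n) (t : ℕ) (x : Fin n → ZMod s) :
    ((affineFlip n s k * negFlip n s k) ^ t) x = Function.update x k (x k + t) := by
  induction t with
  | zero => simp
  | succ t ih =>
      rw [pow_succ']
      show (affineFlip n s k * negFlip n s k) (((affineFlip n s k * negFlip n s k) ^ t) x) = _
      rw [ih]
      show affineFlip n s k (negFlip n s k (Function.update x k (x k + t))) = _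
      rw [negFlip_apply, affineFlip_apply]
      simp only [Function.update_idem, Function.update_self]
      congr 1
      push_cast
      ring

theorem cFlip_eq (n s : ℕ) (t : ℕ) (k : Fin n) :
    cFlip n s ((t : ZMod s) + 1) k = (affineFlip n s k * negFlip n s k) ^ t * affineFlip n s k := by
  apply Equiv.ext; intro x
  show _ = ((affineFlip n s k * negFlip n s k) ^ t) (affineFlip n s k x)
  rw [affineFlip_apply, tau_pow_apply, cFlip_apply]
  simp only [Function.update_idem, Function.update_self]
  congr 1
  ring

theorem cFlip_mem (n s : ℕ) (hn : 0 < n) (t : ℕ) (k : Fin n) :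
    cFlip n s ((t : ZMod s) + 1) k ∈ Subgroup.closure (Set.range (cubicToroidGen n s hn)) := by
  rw [cFlip_eq]
  exact mul_mem (pow_mem (mul_mem (affineFlip_mem n s hn k) (negFlip_mem n s hn k)) t)
    (affineFlip_mem n s hn k)

def cFlipProd (n s : ℕ) (c : ZMod s) : ℕ → Equiv.Perm (Fin n → ZMod s)
  | 0 => 1
  | j + 1 => (if h : j < n then cFlip n s c ⟨j, h⟩ else 1) * cFlipProd n s c j

theorem cFlipProd_apply (n s : ℕ) (c : ZMod s) (j : ℕ) (x : Fin n → ZMod s) (i : Fin n) :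
    cFlipProd n s c j x i = if (i : ℕ) < j then c - x i else x i := by
  induction j generalizing i with
  | zero => simp [cFlipProd]
  | succ j ih =>
      show (if h : j < n then cFlip n s c ⟨j, h⟩ else 1) (cFlipProd n s c j x) i = _
      by_cases hj : j < n
      · rw [dif_pos hj, cFlip_apply, Function.update_apply, ih, ih]
        by_cases hij : i = ⟨j, hj⟩
        · subst hij
          simp
        · rw [if_neg hij]
          have hvij : (i : ℕ) ≠ j := fun h => hij (Fin.ext h)
          by_cases h2 : (i : ℕ) < j
          · rw [if_pos h2, if_pos (by omega)]
          · rw [if_neg h2, if_neg (by omega)]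
      · rw [dif_neg hj]
        show cFlipProd n s c j x i = _
        rw [ih]
        have := i.isLt
        by_cases h2 : (i : ℕ) < j
        · rw [if_pos h2, if_pos (by omega)]
        · rw [if_neg h2, if_neg (by omega)]

theorem cFlipProd_mem (n s : ℕ) (hn : 0 < n) (t : ℕ) (j : ℕ) :
    cFlipProd n s ((t : ZMod s) + 1) j
      ∈ Subgroup.closure (Set.range (cubicToroidGen n s hn)) := by
  induction j with
  | zero => exact one_mem _
  | succ j ih =>
      refine mul_mem ?_ ih
      by_cases hj : j < n
      · rw [dif_pos hj]; exact cFlip_mem n s hn t _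
      · rw [dif_neg hj]; exact one_mem _

def dualizer (n s : ℕ) (c : ZMod s) : Equiv.Perm (Fin n → ZMod s) :=
  cFlipProd n s c n * permPi n s Fin.revPerm

theorem dualizer_apply (n s : ℕ) (c : ZMod s) (x : Fin n → ZMod s) (i : Fin n) :
    dualizer n s c x i = c - x i.rev := by
  show cFlipProd n s c n (permPi n s Fin.revPerm x) i = _
  rw [cFlipProd_apply, if_pos i.isLt]
  rfl

theorem dualizer_mul_self (n s : ℕ) (c : ZMod s) :
    dualizer n s c * dualizer n s c = 1 := by
  apply Equiv.ext; intro x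
  funext i
  show dualizer n s c (dualizer n s c x) i = x i
  rw [dualizer_apply, dualizer_apply, Fin.rev_rev, sub_sub_cancel]

theorem dualizer_inv (n s : ℕ) (c : ZMod s) :
    (dualizer n s c)⁻¹ = dualizer n s c :=
  inv_eq_of_mul_eq_one_right (dualizer_mul_self n s c)

theorem rev_mk {n : ℕ} (a : ℕ) (h : a < n) (h' : n - 1 - a < n) :
    Fin.rev ⟨a, h⟩ = ⟨n - 1 - a, h'⟩ := by
  ext
  rw [Fin.val_rev]
  show n - (a + 1) = n - 1 - a
  omega

set_option maxHeartbeats 1000000 in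
theorem conj_zero (n s : ℕ) (hn : 0 < n) (c : ZMod s) (h2c : 2 * c = 1) :
    dualizer n s c * affineFlip n s ⟨0, hn⟩ * dualizer n s c
      = negFlip n s ⟨n - 1, by omega⟩ := by
  apply Equiv.ext; intro x
  funext j
  show dualizer n s c (affineFlip n s ⟨0, hn⟩ (dualizer n s c x)) j = _
  rw [dualizer_apply, affineFlip_apply, negFlip_apply, Function.update_apply,
    Function.update_apply]
  have hr0 : Fin.rev (⟨0, hn⟩ : Fin n) = ⟨n - 1, by omega⟩ := rev_mk 0 hn (by omega)
  have hr1 : Fin.rev (⟨n - 1, by omega⟩ : Fin n) = ⟨0, hn⟩ := by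
    ext; rw [Fin.val_rev]; show n - (n - 1 + 1) = 0; omega
  rcases eq_or_ne j (⟨n - 1, by omega⟩ : Fin n) with hj | hj
  · subst hj
    rw [if_pos hr1, if_pos rfl, dualizer_apply, hr0]
    linear_combination h2c
  · have hjr : j.rev ≠ (⟨0, hn⟩ : Fin n) := by
      intro hr
      apply hj
      have := congrArg Fin.rev hr
      rwa [Fin.rev_rev, hr0] at this
    rw [if_neg hjr, if_neg hj, dualizer_apply, Fin.rev_rev, sub_sub_cancel]

set_option maxHeartbeats 1000000 in
theorem conj_top (n s : ℕ) (hn : 0 < n) (c : ZMod s) (h2c : 2 * c = 1) :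
    dualizer n s c * negFlip n s ⟨n - 1, by omega⟩ * dualizer n s c
      = affineFlip n s ⟨0, hn⟩ := by
  apply Equiv.ext; intro x
  funext j
  show dualizer n s c (negFlip n s ⟨n - 1, by omega⟩ (dualizer n s c x)) j = _
  rw [dualizer_apply, negFlip_apply, affineFlip_apply, Function.update_apply,
    Function.update_apply]
  have hr0 : Fin.rev (⟨0, hn⟩ : Fin n) = ⟨n - 1, by omega⟩ := rev_mk 0 hn (by omega)
  have hr1 : Fin.rev (⟨n - 1, by omega⟩ : Fin n) = ⟨0, hn⟩ := by
    ext; rw [Fin.val_rev]; show n - (n - 1 + 1) = 0; omega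
  rcases eq_or_ne j (⟨0, hn⟩ : Fin n) with hj | hj
  · subst hj
    rw [if_pos hr0, if_pos rfl, dualizer_apply, hr1]
    linear_combination h2c
  · have hjr : j.rev ≠ (⟨n - 1, by omega⟩ : Fin n) := by
      intro hr
      apply hj
      have := congrArg Fin.rev hr
      rwa [Fin.rev_rev, hr1] at this
    rw [if_neg hjr, if_neg hj, dualizer_apply, Fin.rev_rev, sub_sub_cancel]

theorem conj_mid (n s : ℕ) (hn : 0 < n) (c : ZMod s) (v : ℕ) (hv0 : 0 < v) (hvn : v < n) :
    dualizer n s c * swapCoords n s ⟨v - 1, by omega⟩ ⟨v, hvn⟩ * dualizer n s c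
      = swapCoords n s ⟨n - v - 1, by omega⟩ ⟨n - v, by omega⟩ := by
  set a : Fin n := ⟨v - 1, by omega⟩
  set b : Fin n := ⟨v, hvn⟩
  set a' : Fin n := ⟨n - v - 1, by omega⟩
  set b' : Fin n := ⟨n - v, by omega⟩
  apply Equiv.ext; intro x
  funext j
  show dualizer n s c (swapCoords n s a b (dualizer n s c x)) j = _
  rw [dualizer_apply, swapCoords_apply, dualizer_apply, sub_sub_cancel, swapCoords_apply]
  have h1 : (Fin.revPerm : Equiv.Perm (Fin n))⁻¹ = Fin.revPerm := by
    show Fin.revPerm.symm = Fin.revPerm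
    exact Fin.revPerm_symm
  have h2 := Equiv.swap_apply_apply (Fin.revPerm : Equiv.Perm (Fin n)) a b
  rw [h1] at h2
  have hswap : Fin.rev (Equiv.swap a b (Fin.rev j)) = Equiv.swap (Fin.rev a) (Fin.rev b) j :=
    (DFunLike.congr_fun h2 j).symm
  have ha : Fin.rev a = b' := by
    ext; rw [Fin.val_rev]; show n - (v - 1 + 1) = n - v; omega
  have hb : Fin.rev b = a' := by
    ext; rw [Fin.val_rev]; show n - (v + 1) = n - v - 1; omega
  rw [hswap, ha, hb, Equiv.swap_comm]

theorem conj_gen (n s : ℕ) (hn : 0 < n) (c : ZMod s) (h2c : 2 * c = 1) (i : Fin (n + 1)) :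
    dualizer n s c * cubicToroidGen n s hn i * dualizer n s c
      = cubicToroidGen n s hn i.rev := by
  have hiv := i.isLt
  rcases eq_or_ne ((i : Fin (n+1)) : ℕ) 0 with h0 | h0
  · rw [gen_of_eq_zero n s hn h0, gen_of_eq_top n s hn (by rw [Fin.val_rev]; omega)]
    exact conj_zero n s hn c h2c
  · rcases eq_or_ne ((i : Fin (n+1)) : ℕ) n with htop | htop
    · rw [gen_of_eq_top n s hn htop, gen_of_eq_zero n s hn (by rw [Fin.val_rev]; omega)]
      exact conj_top n s hn c h2c
    · have h0' : ((i.rev : Fin (n+1)) : ℕ) ≠ 0 := by rw [Fin.val_rev]; omega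
      have htop' : ((i.rev : Fin (n+1)) : ℕ) ≠ n := by rw [Fin.val_rev]; omega
      rw [gen_of_mid n s hn h0 htop, gen_of_mid n s hn h0' htop']
      have e1 : (⟨((i.rev : Fin (n+1)) : ℕ) - 1, by omega⟩ : Fin n)
          = ⟨n - (i : ℕ) - 1, by omega⟩ := by
        ext; show ((i.rev : Fin (n+1)) : ℕ) - 1 = n - (i : ℕ) - 1
        rw [Fin.val_rev]; omega
      have e2 : (⟨((i.rev : Fin (n+1)) : ℕ), by omega⟩ : Fin n)
          = ⟨n - (i : ℕ), by omega⟩ := by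
        ext; show ((i.rev : Fin (n+1)) : ℕ) = n - (i : ℕ)
        rw [Fin.val_rev]; omega
      rw [e1, e2]
      exact conj_mid n s hn c (i : ℕ) (by omega) (by omega)

/-- The cubic toroid `{4, 3^{n-2}, 4}_{(s,0^{n-1})}` is internally self-dual iff `s`
is odd: the group generated by `ρ₀, …, ρₙ` contains an element `α` with
`α ρᵢ α⁻¹ = ρ_{n-i}` for all `i` if and only if `s` is odd. -/
theorem cubic_toroid_internally_self_dual_iff_odd (n s : ℕ) (hn : 2 ≤ n) (hs : 2 ≤ s) :
    (∃ α ∈ Subgroup.closure (Set.range (cubicToroidGen n s (by omega))),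
      ∀ i : Fin (n + 1),
        α * cubicToroidGen n s (by omega) i * α⁻¹ = cubicToroidGen n s (by omega) i.rev)
      ↔ Odd s := by
  constructor
  · rintro ⟨α, -, hα⟩
    have h := hα (Fin.last n)
    have hlast : ((Fin.last n : Fin (n+1)) : ℕ) = n := rfl
    have hrev0 : (((Fin.last n).rev : Fin (n+1)) : ℕ) = 0 := by
      rw [Fin.val_rev, hlast]; omega
    rw [gen_of_eq_top n s (by omega) hlast, gen_of_eq_zero n s (by omega) hrev0] at h
    have hN0 : negFlip n s ⟨n - 1, by omega⟩ (0 : Fin n → ZMod s) = 0 := by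
      rw [negFlip_apply]
      funext j
      rw [Function.update_apply]
      split <;> simp
    have hy : affineFlip n s ⟨0, by omega⟩ (α 0) = α 0 := by
      rw [← h]
      show α (negFlip n s _ (α⁻¹ (α 0))) = α 0
      rw [Equiv.Perm.inv_def, Equiv.symm_apply_apply, hN0]
    have key := congrFun hy ⟨0, by omega⟩
    rw [affineFlip_apply, Function.update_self] at key
    rcases Nat.even_or_odd s with he | ho
    · exfalso
      have hdvd : 2 ∣ s := he.two_dvd
      have h2 := congrArg (ZMod.castHom hdvd (ZMod 2)) key
      rw [map_sub, map_one] at h2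
      have hno : ∀ a : ZMod 2, 1 - a ≠ a := by decide
      exact hno _ h2
    · exact ho
  · intro hodd
    obtain ⟨t, ht⟩ := hodd
    have h2c : 2 * ((t : ZMod s) + 1) = 1 := by
      have hs0 : ((s : ℕ) : ZMod s) = 0 := ZMod.natCast_self s
      have h1 : ((s : ℕ) : ZMod s) + 1 = 2 * ((t : ZMod s) + 1) := by
        rw [ht]; push_cast; ring
      rw [hs0, zero_add] at h1
      exact h1.symm
    refine ⟨dualizer n s ((t : ZMod s) + 1), ?_, ?_⟩
    · exact mul_mem (cFlipProd_mem n s (by omega) t n) (permPi_mem n s (by omega) _)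
    · intro i
      rw [dualizer_inv]
      exact conj_gen n s (by omega) _ h2c i
end

section
/- Let Γ with generators ρ₀, …, ρ_{n−1} be a string C-group of rank n (n ≥ 2), with each ρᵢ of order 2. If α ∈ Γ is dualizing, then α does not lie in the subgroup generated by ρ₀, …, ρ_{n−2}, and α does not lie in the subgroup generated by ρ₁, …, ρ_{n−1}. -/
/-- In a string C-group of rank `n ≥ 2`, a dualizing element lies neither in the
subgroup generated by `ρ₀, …, ρ_{n-2}` nor in the subgroup generated by
`ρ₁, …, ρ_{n-1}`. -/
theorem dualizing_not_in_facet_or_vertex_subgroup {G : Type*} [Group G] {n : ℕ}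
    (hn : 2 ≤ n) (ρ : Fin n → G) (hC : IsStringCGroup ρ)
    (α : G) (hα : IsDualizing ρ α) :
    α ∉ Subgroup.closure (ρ '' {i : Fin n | (i : ℕ) < n - 1}) ∧
    α ∉ Subgroup.closure (ρ '' {i : Fin n | 0 < (i : ℕ)}) := by
  obtain ⟨-, hord, -, hint⟩ := hC
  have hn0 : 0 < n := by omega
  set z : Fin n := ⟨0, hn0⟩ with hz
  set l : Fin n := ⟨n - 1, by omega⟩ with hl
  have hrev : z.rev = l := by
    ext; simp [Fin.rev, hz, hl]
  have hrev' : l.rev = z := by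
    ext; simp [Fin.rev, hz, hl]; omega
  have hne : ∀ i : Fin n, ρ i ≠ 1 := by
    intro i h
    have := hord i
    rw [h, orderOf_one] at this
    omega
  constructor
  · intro hmem
    -- ρ l = α * ρ z * α⁻¹ ∈ closure, but also ρ l ∈ closure {l}
    have h1 : ρ l ∈ Subgroup.closure (ρ '' {i : Fin n | (i : ℕ) < n - 1}) := by
      rw [← hrev, ← hα z]
      exact mul_mem (mul_mem hmem (Subgroup.subset_closure ⟨z, by simp [hz]; omega, rfl⟩))
        (inv_mem hmem)
    have h2 : ρ l ∈ Subgroup.closure (ρ '' {l}) :=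
      Subgroup.subset_closure ⟨l, rfl, rfl⟩
    have h3 : ρ l ∈ Subgroup.closure (ρ '' ({i : Fin n | (i : ℕ) < n - 1} ∩ {l})) := by
      rw [← hint]; exact ⟨h1, h2⟩
    have h4 : {i : Fin n | (i : ℕ) < n - 1} ∩ {l} = ∅ := by
      ext i
      simp only [Set.mem_inter_iff, Set.mem_setOf_eq, Set.mem_singleton_iff, Set.mem_empty_iff_false,
        iff_false, not_and]
      intro hi hil
      rw [hil] at hi
      simp [hl] at hi
    rw [h4] at h3
    simp only [Set.image_empty, Subgroup.closure_empty, Subgroup.mem_bot] at h3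
    exact hne l h3
  · intro hmem
    have h1 : ρ z ∈ Subgroup.closure (ρ '' {i : Fin n | 0 < (i : ℕ)}) := by
      rw [← hrev', ← hα l]
      exact mul_mem (mul_mem hmem (Subgroup.subset_closure ⟨l, by simp [hl]; omega, rfl⟩))
        (inv_mem hmem)
    have h2 : ρ z ∈ Subgroup.closure (ρ '' {z}) :=
      Subgroup.subset_closure ⟨z, rfl, rfl⟩
    have h3 : ρ z ∈ Subgroup.closure (ρ '' ({i : Fin n | 0 < (i : ℕ)} ∩ {z})) := by
      rw [← hint]; exact ⟨h1, h2⟩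
    have h4 : {i : Fin n | 0 < (i : ℕ)} ∩ {z} = ∅ := by
      ext i
      simp only [Set.mem_inter_iff, Set.mem_setOf_eq, Set.mem_singleton_iff, Set.mem_empty_iff_false,
        iff_false, not_and]
      intro hi hil
      rw [hil] at hi
      simp [hz] at hi
    rw [h4] at h3
    simp only [Set.image_empty, Subgroup.closure_empty, Subgroup.mem_bot] at h3
    exact hne z h3
end

section
/- Let G be a group and ρ₀, ρ₁, ρ₂ ∈ G with ρ₀² = ρ₁² = ρ₂² = 1 and ρ₀ρ₂ = ρ₂ρ₀. Define λ₀ = ρ₀ρ₂, λ₁ = ρ₁, λ₂ = ρ₀. Then there exists α ∈ G with αρ₀α⁻¹ = ρ₀ρ₂, αρ₁α⁻¹ = ρ₁, αρ₂α⁻¹ = ρ₂ if and only if there exists β ∈ G with βλᵢβ⁻¹ = λ_{2−i} for i = 0, 1, 2. (A regular polyhedron P is internally self-Petrie if and only if (P*)^π is internally self-dual.) -/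
/-- For a group generated by involutions `ρ₀, ρ₁, ρ₂` with `ρ₀` and `ρ₂` commuting,
there is an element conjugating `ρ₀ ↦ ρ₀ρ₂`, `ρ₁ ↦ ρ₁`, `ρ₂ ↦ ρ₂` (internal
self-Petriality) iff there is an element `β` conjugating `λᵢ ↦ λ_{2-i}` for the
generators `λ₀ = ρ₀ρ₂`, `λ₁ = ρ₁`, `λ₂ = ρ₀` (internal self-duality of `(P*)^π`). -/
theorem internally_self_petrie_iff_dual_petrial_internally_self_dual
    {G : Type*} [Group G] (ρ₀ ρ₁ ρ₂ : G)
    (h₀ : ρ₀ ^ 2 = 1) (h₁ : ρ₁ ^ 2 = 1) (h₂ : ρ₂ ^ 2 = 1)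
    (hc : ρ₀ * ρ₂ = ρ₂ * ρ₀) :
    (∃ α : G, α * ρ₀ * α⁻¹ = ρ₀ * ρ₂ ∧ α * ρ₁ * α⁻¹ = ρ₁ ∧ α * ρ₂ * α⁻¹ = ρ₂) ↔
    (∃ β : G, β * (ρ₀ * ρ₂) * β⁻¹ = ρ₀ ∧ β * ρ₁ * β⁻¹ = ρ₁ ∧
      β * ρ₀ * β⁻¹ = ρ₀ * ρ₂) := by
  have h₀' : ρ₀ * ρ₀ = 1 := by rw [← sq]; exact h₀
  have h₂' : ρ₂ * ρ₂ = 1 := by rw [← sq]; exact h₂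
  constructor
  · rintro ⟨α, ha0, ha1, ha2⟩
    refine ⟨α, ?_, ha1, ha0⟩
    have key : α * (ρ₀ * ρ₂) * α⁻¹ = (α * ρ₀ * α⁻¹) * (α * ρ₂ * α⁻¹) := by group
    rw [key, ha0, ha2, mul_assoc, h₂', mul_one]
  · rintro ⟨β, hb0, hb1, hb2⟩
    refine ⟨β, hb2, hb1, ?_⟩
    have key : β * (ρ₀ * ρ₂) * β⁻¹ = (β * ρ₀ * β⁻¹) * (β * ρ₂ * β⁻¹) := by group
    rw [key, hb2] at hb0
    calc β * ρ₂ * β⁻¹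
        = (ρ₀ * ρ₂)⁻¹ * (ρ₀ * ρ₂ * (β * ρ₂ * β⁻¹)) := by group
      _ = (ρ₀ * ρ₂)⁻¹ * ρ₀ := by rw [hb0]
      _ = ρ₂ := by
          rw [mul_inv_rev, mul_assoc,
            inv_eq_of_mul_eq_one_left h₀', inv_eq_of_mul_eq_one_left h₂',
            h₀', mul_one]
end

section
/- Let n ≥ 1 and let π₁ and π₂ be permutations of a set with n elements, each acting as a single n-cycle on all n points, with π₁ ≠ π₂. Suppose π₁^{d₁} = π₂^{d₂} for integers d₁, d₂, and suppose that for some positive integer k there is a unique point i such that π₁^j(i) = π₂^j(i) for all j with 1 ≤ j ≤ k. Then d₁ ≡ 0 (mod n) and d₂ ≡ 0 (mod n), i.e., π₁^{d₁} = π₂^{d₂} is the identity. -/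
/-- Suppose `π₁ ≠ π₂` are permutations of `n` points, each a single `n`-cycle on all
`n` points, with `π₁ ^ d₁ = π₂ ^ d₂` for integers `d₁, d₂`.  If for some positive `k`
there is a unique point `i` with `π₁ ^ j i = π₂ ^ j i` for all `1 ≤ j ≤ k`, then
`d₁ ≡ 0` and `d₂ ≡ 0 (mod n)`, i.e. `π₁ ^ d₁ = π₂ ^ d₂` is the identity. -/
theorem distinct_cycles_common_power_trivial (n : ℕ) (hn : 1 ≤ n)
    (π₁ π₂ : Equiv.Perm (Fin n))
    (h₁ : π₁.IsCycle ∧ π₁.support = Finset.univ)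
    (h₂ : π₂.IsCycle ∧ π₂.support = Finset.univ)
    (hne : π₁ ≠ π₂)
    (d₁ d₂ : ℤ) (hd : π₁ ^ d₁ = π₂ ^ d₂)
    (k : ℕ) (hk : 0 < k)
    (huniq : ∃! i : Fin n, ∀ j : ℕ, 1 ≤ j → j ≤ k → (π₁ ^ j) i = (π₂ ^ j) i) :
    (n : ℤ) ∣ d₁ ∧ (n : ℤ) ∣ d₂ ∧ π₁ ^ d₁ = 1 := by
  obtain ⟨i, hi, huni⟩ := huniq
  -- σ := π₁ ^ d₁ fixes i
  have hσi : (π₁ ^ d₁) i = i := by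
    refine huni _ (fun j h1 h2 => ?_)
    have c1 : (π₁ ^ (j : ℕ)) ((π₁ ^ d₁) i) = (π₁ ^ d₁) ((π₁ ^ (j : ℕ)) i) := by
      rw [← Equiv.Perm.mul_apply, ← Equiv.Perm.mul_apply, ← zpow_natCast, ← zpow_add,
        ← zpow_add, add_comm]
    have c2 : (π₂ ^ (j : ℕ)) ((π₂ ^ d₂) i) = (π₂ ^ d₂) ((π₂ ^ (j : ℕ)) i) := by
      rw [← Equiv.Perm.mul_apply, ← Equiv.Perm.mul_apply, ← zpow_natCast, ← zpow_add,
        ← zpow_add, add_comm]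
    rw [c1, hi j h1 h2, hd, c2]
  have hcyc1 : π₁.IsCycleOn (Finset.univ : Finset (Fin n)) := by
    have := h₁.1.isCycleOn
    convert this using 1
    ext x
    simp [← Equiv.Perm.mem_support, h₁.2]
  have hcyc2 : π₂.IsCycleOn (Finset.univ : Finset (Fin n)) := by
    have := h₂.1.isCycleOn
    convert this using 1
    ext x
    simp [← Equiv.Perm.mem_support, h₂.2]
  have hd1 : (n : ℤ) ∣ d₁ := by
    have := (hcyc1.zpow_apply_eq (Finset.mem_univ i)).1 hσi
    simpa using this
  have hd2 : (n : ℤ) ∣ d₂ := by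
    have hσi' : (π₂ ^ d₂) i = i := by rw [← hd]; exact hσi
    have := (hcyc2.zpow_apply_eq (Finset.mem_univ i)).1 hσi'
    simpa using this
  refine ⟨hd1, hd2, ?_⟩
  have hord : orderOf π₁ = n := by
    rw [h₁.1.orderOf, h₁.2, Finset.card_univ, Fintype.card_fin]
  rw [← orderOf_dvd_iff_zpow_eq_one, hord]
  exact_mod_cast hd1
end
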